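/- arXiv:2512.13273 — 4 statements merged into one kernel-verified Lean document; each statement's English description precedes it below -/
import Mathlib

section
/- Let D be a triangulated category with a t-structure 𝒰 = (U^{≤0}, U^{≥0}), let m be a positive integer, and set m-ℋ = U^{≥-(m-1)} ∩ U^{≤0}. Let ℰ1, ℰ2, ℰ3 be m-extended hearts on D with ℰ1 ≤ m-ℋ, ℰ2 ≤ m-ℋ, ℰ3 ≤ m-ℋ. If ℰ1 ≤ ℰ2 and ℰ2 ≤ ℰ3, then ℰ1 ≤ ℰ3. -/
open CategoryTheory Category Limits Pretriangulated

universe v u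

variable (D : Type u) [Category.{v} D] [Preadditive D] [HasZeroObject D]
  [HasShift D ℤ] [∀ n : ℤ, (shiftFunctor D n).Additive]
  [Pretriangulated D] [HasBinaryBiproducts D]

/-- `shiftSet D S n` is the full subcategory `S[n]`: objects isomorphic to `X⟦n⟧`
with `X ∈ S`. -/
def shiftSet (S : Set D) (n : ℤ) : Set D :=
  {A | ∃ B ∈ S, Nonempty (A ≅ B⟦n⟧)}

/-- `starSet D X Y` is `X * Y`: the class of objects `A` admitting a distinguished
triangle `X → A → Y → X[1]` with `X ∈ 𝒳` and `Y ∈ 𝒴`. -/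
def starSet (X Y : Set D) : Set D :=
  {A | ∃ (B C : D) (f : B ⟶ A) (g : A ⟶ C) (h : C ⟶ B⟦(1 : ℤ)⟧),
    B ∈ X ∧ C ∈ Y ∧ Triangle.mk f g h ∈ distTriang D}

/-- `Hom(X, Y) = 0`: every morphism from an object of `X` to an object of `Y` is zero. -/
def homZero (X Y : Set D) : Prop :=
  ∀ A ∈ X, ∀ B ∈ Y, ∀ f : A ⟶ B, f = 0

/-- a class of objects closed under isomorphisms -/
def isoClosed (S : Set D) : Prop :=
  ∀ ⦃A B : D⦄, (A ≅ B) → A ∈ S → B ∈ S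

/-- an additive full subcategory (closed under isomorphisms) which is closed under
direct summands -/
structure AdditiveClosed (S : Set D) : Prop where
  iso : isoClosed D S
  zero : ∀ Z : D, IsZero Z → Z ∈ S
  sum : ∀ A ∈ S, ∀ B ∈ S, (A ⊞ B) ∈ S
  summand : ∀ A ∈ S, ∀ (X : D) (i : X ⟶ A) (p : A ⟶ X), i ≫ p = 𝟙 X → X ∈ S

/-- a torsion pair `(U, V)` in the triangulated category `D` -/
structure IsTorsionPair (U V : Set D) : Prop where
  addU : AdditiveClosed D U
  addV : AdditiveClosed D V
  hom_zero : homZero D U V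
  cover : ∀ A : D, A ∈ starSet D U V

/-- `t₁ ≼ t₂` for torsion pairs in a triangulated category: `U₁ ⊆ U₂` and `U₁[1] ⊆ U₂`. -/
def torsLE (U₁ U₂ : Set D) : Prop :=
  U₁ ⊆ U₂ ∧ shiftSet D U₁ 1 ⊆ U₂

/-- a torsion pair `(T, F)` in an (extension-closed) full subcategory `H` of `D`:
`T` and `F` are additive subcategories of `H` closed under direct summands,
`Hom(T, F) = 0`, and every object of `H` admits a distinguished triangle
`T → X → F → T[1]` with `T ∈ 𝒯`, `F ∈ ℱ`. -/
structure IsTorsionPairIn (H T F : Set D) : Prop where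
  subT : T ⊆ H
  subF : F ⊆ H
  isoT : ∀ ⦃A B : D⦄, (A ≅ B) → A ∈ T → B ∈ H → B ∈ T
  isoF : ∀ ⦃A B : D⦄, (A ≅ B) → A ∈ F → B ∈ H → B ∈ F
  zeroT : ∀ Z : D, IsZero Z → Z ∈ H → Z ∈ T
  zeroF : ∀ Z : D, IsZero Z → Z ∈ H → Z ∈ F
  sumT : ∀ A ∈ T, ∀ B ∈ T, (A ⊞ B) ∈ T
  sumF : ∀ A ∈ F, ∀ B ∈ F, (A ⊞ B) ∈ F
  summandT : ∀ A ∈ T, ∀ (X : D) (i : X ⟶ A) (p : A ⟶ X), i ≫ p = 𝟙 X → X ∈ H → X ∈ T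
  summandF : ∀ A ∈ F, ∀ (X : D) (i : X ⟶ A) (p : A ⟶ X), i ≫ p = 𝟙 X → X ∈ H → X ∈ F
  hom_zero : homZero D T F
  cover : ∀ A ∈ H, A ∈ starSet D T F

/-- an `s`-torsion pair in `H`: a torsion pair with moreover `Hom(T, F[-1]) = 0`. -/
structure IsSTorsionPairIn (H T F : Set D) extends IsTorsionPairIn D H T F : Prop where
  neg_hom_zero : ∀ A ∈ T, ∀ B ∈ F, ∀ f : A ⟶ B⟦(-1 : ℤ)⟧, f = 0

/-- the relation `≼` for torsion pairs in a subcategory `H`: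
`Hom(T, F') = 0` and `Hom(T, F'[-1]) = 0`. -/
def torsLEIn (T F' : Set D) : Prop :=
  homZero D T F' ∧ homZero D T (shiftSet D F' (-1))

/-- a `t`-structure `(L, G) = (S^{≤0}, S^{≥0})` on a triangulated (full) subcategory `S`
of `D` (take `S = Set.univ` for a `t`-structure on `D` itself). -/
structure IsTStructureOn (S L G : Set D) : Prop where
  subL : L ⊆ S
  subG : G ⊆ S
  isoL : ∀ ⦃A B : D⦄, (A ≅ B) → A ∈ L → B ∈ S → B ∈ L
  isoG : ∀ ⦃A B : D⦄, (A ≅ B) → A ∈ G → B ∈ S → B ∈ G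
  hom_zero : homZero D L (shiftSet D G (-1))
  cover : ∀ A ∈ S, A ∈ starSet D L (shiftSet D G (-1))
  shiftL : L ⊆ shiftSet D L (-1)
  shiftG : shiftSet D G (-1) ⊆ G

/-- a `t`-structure `(L, G) = (D^{≤0}, D^{≥0})` on `D`. -/
def IsTStructure (L G : Set D) : Prop := IsTStructureOn D Set.univ L G

/-- a triangulated full subcategory of `D`. -/
structure IsTriangulatedSub (S : Set D) : Prop where
  iso : isoClosed D S
  zero : ∀ Z : D, IsZero Z → Z ∈ S
  shift : ∀ (n : ℤ), ∀ A ∈ S, A⟦n⟧ ∈ S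
  ext₂ : ∀ (T : Triangle D), (T ∈ distTriang D) → T.obj₁ ∈ S → T.obj₃ ∈ S → T.obj₂ ∈ S

/-- an `m`-extended heart on `D`: a full subcategory of the form
`V^{≥ -(m-1)} ∩ V^{≤ 0}` for some `t`-structure `(V^{≤0}, V^{≥0})` on `D`. -/
def IsExtendedHeart (m : ℤ) (E : Set D) : Prop :=
  ∃ L G : Set D, IsTStructure D L G ∧ E = shiftSet D G (m - 1) ∩ L

/-- the relation `E₁ ≤ E₂` for `m`-extended hearts:
`E₁ ⊆ E₂[m] * E₂` and `E₂ ⊆ E₁ * E₁[-m]`. -/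
def extHeartLE (m : ℤ) (E₁ E₂ : Set D) : Prop :=
  E₁ ⊆ starSet D (shiftSet D E₂ m) E₂ ∧ E₂ ⊆ starSet D E₁ (shiftSet D E₁ (-m))

set_option linter.unusedSectionVars false

namespace Stmt13Aux

/-! ### basic `shiftSet` lemmas -/

lemma mem_shiftSet_of {S : Set D} {X : D} (h : X ∈ S) (n : ℤ) :
    X⟦n⟧ ∈ shiftSet D S n :=
  ⟨X, h, ⟨Iso.refl _⟩⟩

lemma mem_shiftSet_zero {S : Set D} {X : D} (h : X ∈ S) : X ∈ shiftSet D S 0 :=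
  ⟨X, h, ⟨((shiftFunctorZero D ℤ).app X).symm⟩⟩

lemma subset_shiftSet_zero (S : Set D) : S ⊆ shiftSet D S 0 :=
  fun _ hX => mem_shiftSet_zero D hX

lemma shiftSet_mono {S S' : Set D} (h : S ⊆ S') (n : ℤ) :
    shiftSet D S n ⊆ shiftSet D S' n := by
  rintro X ⟨B, hB, he⟩
  exact ⟨B, h hB, he⟩

lemma mem_shiftSet_iso {S : Set D} {n : ℤ} {X Y : D} (e : X ≅ Y)
    (h : X ∈ shiftSet D S n) : Y ∈ shiftSet D S n := by
  obtain ⟨B, hB, ⟨e'⟩⟩ := h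
  exact ⟨B, hB, ⟨e.symm ≪≫ e'⟩⟩

lemma mem_shiftSet_trans {S : Set D} {a b c : ℤ} (h : a + b = c) {X : D}
    (hX : X ∈ shiftSet D (shiftSet D S a) b) : X ∈ shiftSet D S c := by
  obtain ⟨B, ⟨C0, hC0, ⟨e2⟩⟩, ⟨e1⟩⟩ := hX
  exact ⟨C0, hC0, ⟨e1 ≪≫ (shiftFunctor D b).mapIso e2 ≪≫
    ((shiftFunctorAdd' D a b c h).app C0).symm⟩⟩

lemma shiftSet_collapse {S : Set D} {a b c : ℤ} (h : a + b = c) :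
    shiftSet D (shiftSet D S a) b ⊆ shiftSet D S c :=
  fun _ hX => mem_shiftSet_trans D h hX

lemma shift_mem_shiftSet {S : Set D} {a : ℤ} (b : ℤ) {c : ℤ} (h : a + b = c) {X : D}
    (hX : X ∈ shiftSet D S a) : X⟦b⟧ ∈ shiftSet D S c :=
  mem_shiftSet_trans D h (mem_shiftSet_of D hX b)

lemma mapZero (n : ℤ) {X Y : D} {f : X ⟶ Y} (h : (shiftFunctor D n).map f = 0) :
    f = 0 :=
  (shiftFunctor D n).map_injective (by rw [h, Functor.map_zero])

/-! ### basic `starSet` lemmas -/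

lemma star_mono {U V U' V' : Set D} (hU : U ⊆ U') (hV : V ⊆ V') :
    starSet D U V ⊆ starSet D U' V' := by
  rintro A ⟨B, C, u, v, w, hB, hC, hd⟩
  exact ⟨B, C, u, v, w, hU hB, hV hC, hd⟩

lemma star_iso {U V : Set D} {A A' : D} (e : A ≅ A') (hA : A ∈ starSet D U V) :
    A' ∈ starSet D U V := by
  obtain ⟨B, C, u, v, w, hB, hC, hd⟩ := hA
  refine ⟨B, C, u ≫ e.hom, e.inv ≫ v, w, hB, hC,
    isomorphic_distinguished _ hd _ ?_⟩
  exact Triangle.isoMk _ _ (Iso.refl _) e.symm (Iso.refl _) (by exact (assoc _ _ _).trans ((congrArg (u ≫ ·) e.hom_inv_id).trans ((comp_id u).trans (id_comp u).symm))) (by exact comp_id _) (by exact (congrArg (w ≫ ·) (CategoryTheory.Functor.map_id _ _)).trans ((comp_id w).trans (id_comp w).symm))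

lemma star_shift_one {U V : Set D} {A : D} (hA : A ∈ starSet D U V) :
    A⟦(1 : ℤ)⟧ ∈ starSet D (shiftSet D U 1) (shiftSet D V 1) := by
  obtain ⟨B, C, u, v, w, hB, hC, hd⟩ := hA
  exact ⟨B⟦(1 : ℤ)⟧, C⟦(1 : ℤ)⟧, _, _, _, mem_shiftSet_of D hB 1, mem_shiftSet_of D hC 1,
    rot_of_distTriang _ (rot_of_distTriang _ (rot_of_distTriang _ hd))⟩

lemma star_shift_negOne {U V : Set D} {A : D} (hA : A ∈ starSet D U V) :
    A⟦(-1 : ℤ)⟧ ∈ starSet D (shiftSet D U (-1)) (shiftSet D V (-1)) := by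
  obtain ⟨B, C, u, v, w, hB, hC, hd⟩ := hA
  exact ⟨B⟦(-1 : ℤ)⟧, C⟦(-1 : ℤ)⟧, _, _, _, mem_shiftSet_of D hB (-1), mem_shiftSet_of D hC (-1),
    inv_rot_of_distTriang _ (inv_rot_of_distTriang _ (inv_rot_of_distTriang _ hd))⟩

lemma star_shift {U V : Set D} (n : ℤ) {A : D} (hA : A ∈ starSet D U V) :
    A⟦n⟧ ∈ starSet D (shiftSet D U n) (shiftSet D V n) := by
  induction n using Int.induction_on with
  | zero =>
      exact star_iso D ((shiftFunctorZero D ℤ).app A).symm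
        (star_mono D (subset_shiftSet_zero D U) (subset_shiftSet_zero D V) hA)
  | succ k ih =>
      have h1 := star_shift_one D ih
      have h2 := star_mono D (shiftSet_collapse D (rfl : (k : ℤ) + 1 = (k : ℤ) + 1))
        (shiftSet_collapse D (rfl : (k : ℤ) + 1 = (k : ℤ) + 1)) h1
      exact star_iso D ((shiftFunctorAdd' D (k : ℤ) 1 ((k : ℤ) + 1) rfl).app A).symm h2
  | pred k ih =>
      have h1 := star_shift_negOne D ih
      have h2 := star_mono D
        (shiftSet_collapse D (show -(k : ℤ) + -1 = -(k : ℤ) - 1 by ring))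
        (shiftSet_collapse D (show -(k : ℤ) + -1 = -(k : ℤ) - 1 by ring)) h1
      exact star_iso D ((shiftFunctorAdd' D (-(k : ℤ)) (-1) (-(k : ℤ) - 1) (by ring)).app A).symm h2

lemma homZero_into_star {U V : Set D} {A W : D} (hA : A ∈ starSet D U V)
    (hU : ∀ B ∈ U, ∀ g : W ⟶ B, g = 0) (hV : ∀ C' ∈ V, ∀ g : W ⟶ C', g = 0)
    (f : W ⟶ A) : f = 0 := by
  obtain ⟨B, C, u, v, w, hB, hC, hd⟩ := hA
  obtain ⟨g, hg⟩ := Triangle.coyoneda_exact₂ _ hd f (hV C hC (f ≫ v))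
  rw [hg, hU B hB g]; exact zero_comp

lemma homZero_from_star {U V : Set D} {A W : D} (hA : A ∈ starSet D U V)
    (hU : ∀ B ∈ U, ∀ g : B ⟶ W, g = 0) (hV : ∀ C' ∈ V, ∀ g : C' ⟶ W, g = 0)
    (f : A ⟶ W) : f = 0 := by
  obtain ⟨B, C, u, v, w, hB, hC, hd⟩ := hA
  obtain ⟨g, hg⟩ := Triangle.yoneda_exact₂ _ hd f (hU B hB (u ≫ f))
  rw [hg, hV C hC g]; exact comp_zero

/-! ### t-structure lemmas -/

section TS

variable {L G : Set D} (ht : IsTStructureOn D Set.univ L G)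
include ht

lemma isoL' {A B : D} (e : A ≅ B) (hA : A ∈ L) : B ∈ L :=
  ht.isoL e hA (Set.mem_univ _)

lemma L_shift_one {X : D} (hX : X ∈ L) : X⟦(1 : ℤ)⟧ ∈ L := by
  obtain ⟨B, hB, ⟨e⟩⟩ := ht.shiftL hX
  exact isoL' D ht (((shiftFunctorZero D ℤ).app B).symm ≪≫
    (shiftFunctorAdd' D (-1) 1 0 (by ring)).app B ≪≫
    (shiftFunctor D (1 : ℤ)).mapIso e.symm) hB

lemma L_shift_nonneg {X : D} (hX : X ∈ L) (n : ℤ) (hn : 0 ≤ n) : X⟦n⟧ ∈ L := by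
  refine Int.le_induction (motive := fun k _ => X⟦k⟧ ∈ L) ?_ ?_ n hn
  · exact isoL' D ht ((shiftFunctorZero D ℤ).app X).symm hX
  · intro k _ ih
    exact isoL' D ht ((shiftFunctorAdd' D k 1 (k + 1) rfl).app X).symm
      (L_shift_one D ht ih)

lemma orth {X Y : D} (hX : X ∈ L) (hY : Y ∈ G) {a b : ℤ} (hab : b < a)
    (f : X⟦a⟧ ⟶ Y⟦b⟧) : f = 0 := by
  have h1 : (X⟦a⟧)⟦-b - 1⟧ ∈ L :=
    isoL' D ht ((shiftFunctorAdd' D a (-b - 1) (a - b - 1) (by ring)).app X)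
      (L_shift_nonneg D ht hX (a - b - 1) (by omega))
  have h2 : (Y⟦b⟧)⟦-b - 1⟧ ∈ shiftSet D G (-1) :=
    ⟨Y, hY, ⟨((shiftFunctorAdd' D b (-b - 1) (-1) (by ring)).app Y).symm⟩⟩
  have h3 := ht.hom_zero _ h1 _ h2 ((shiftFunctor D (-b - 1)).map f)
  exact mapZero D (-b - 1) h3

lemma orthGen {a b : ℤ} (hab : b < a) {X' Y' : D}
    (hX : X' ∈ shiftSet D L a) (hY : Y' ∈ shiftSet D G b) (f : X' ⟶ Y') : f = 0 := by
  obtain ⟨X, hX0, ⟨e₁⟩⟩ := hX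
  obtain ⟨Y, hY0, ⟨e₂⟩⟩ := hY
  have h := orth D ht hX0 hY0 hab (e₁.inv ≫ f ≫ e₂.hom)
  calc f = e₁.hom ≫ (e₁.inv ≫ f ≫ e₂.hom) ≫ e₂.inv := by simp
  _ = 0 := by rw [h, zero_comp, comp_zero]

lemma charL {A : D} (hA : ∀ Y' ∈ shiftSet D G (-1), ∀ f : A ⟶ Y', f = 0) :
    A ∈ L := by
  obtain ⟨P, Q, u, v, w, hP, hQ, hd⟩ := ht.cover A (Set.mem_univ A)
  obtain ⟨ψ, hψ⟩ := Triangle.yoneda_exact₃ _ hd (𝟙 Q) (by show v ≫ 𝟙 Q = 0; rw [comp_id]; exact hA Q hQ v)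
  have hψ0 : ψ = 0 :=
    orthGen D ht (show (-1 : ℤ) < 1 by norm_num) (mem_shiftSet_of D hP 1) hQ ψ
  have hQ0 : IsZero Q := by
    rw [IsZero.iff_id_eq_zero, hψ, hψ0]; exact comp_zero
  have : IsIso u := (Triangle.isZero₃_iff_isIso₁ _ hd).1 hQ0
  exact isoL' D ht (asIso u) hP

lemma charG {A : D} (hA : ∀ X ∈ L, ∀ f : X ⟶ A, f = 0) :
    A ∈ shiftSet D G (-1) := by
  obtain ⟨P, Q, u, v, w, hP, hQ, hd⟩ := ht.cover A (Set.mem_univ A)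
  obtain ⟨s, hs⟩ := Triangle.coyoneda_exact₂ _
    (inv_rot_of_distTriang _ hd) (𝟙 P) (by show 𝟙 P ≫ u = 0; rw [id_comp]; exact hA P hP u)
  have hs0 : s = 0 :=
    orthGen D ht (show (-2 : ℤ) < 0 by norm_num) (mem_shiftSet_zero D hP)
      (shift_mem_shiftSet D (-1) (show (-1 : ℤ) + -1 = -2 by ring) hQ) s
  have hP0 : IsZero P := by
    rw [IsZero.iff_id_eq_zero, hs, hs0]; exact zero_comp
  have : IsIso v :=
    (Triangle.isZero₁_iff_isIso₂ _ hd).1 hP0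
  exact mem_shiftSet_iso D (asIso v).symm hQ

lemma cover_at (A : D) (k : ℤ) :
    A ∈ starSet D (shiftSet D L k) (shiftSet D G (k - 1)) := by
  have h0 := ht.cover (A⟦-k⟧) (Set.mem_univ _)
  have h1 := star_shift D k h0
  have h2 := star_mono D (subset_rfl)
    (shiftSet_collapse D (show (-1 : ℤ) + k = k - 1 by ring)) h1
  exact star_iso D (((shiftFunctorAdd' D (-k) k 0 (by ring)).app A).symm ≪≫
    (shiftFunctorZero D ℤ).app A) h2

/-! ### the two decomposition patterns -/

lemma patA {W U V : Set D} (hW : W ⊆ starSet D U V) {p q : ℤ}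
    (hU : U ⊆ shiftSet D G p) (hV : V ⊆ shiftSet D G q)
    {a b : ℤ} (h₁ : p + b < a) (h₂ : q + b < a) :
    homZero D (shiftSet D L a) (shiftSet D W b) := by
  rintro X hX Z ⟨W₀, hW₀, ⟨e⟩⟩ f
  have hZ := star_iso D e.symm (star_shift D b (hW hW₀))
  exact homZero_into_star D hZ
    (fun B hB g => orthGen D ht h₁ hX (mem_shiftSet_trans D rfl (shiftSet_mono D hU b hB)) g)
    (fun C hC g => orthGen D ht h₂ hX (mem_shiftSet_trans D rfl (shiftSet_mono D hV b hC)) g) f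

lemma patB {W U V : Set D} (hW : W ⊆ starSet D U V) {p q : ℤ}
    (hU : U ⊆ shiftSet D L p) (hV : V ⊆ shiftSet D L q)
    {b c : ℤ} (h₁ : c < p + b) (h₂ : c < q + b) :
    homZero D (shiftSet D W b) (shiftSet D G c) := by
  rintro Z ⟨W₀, hW₀, ⟨e⟩⟩ Y hY f
  have hZ := star_iso D e.symm (star_shift D b (hW hW₀))
  exact homZero_from_star D hZ
    (fun B hB g => orthGen D ht h₁ (mem_shiftSet_trans D rfl (shiftSet_mono D hU b hB)) hY g)
    (fun C hC g => orthGen D ht h₂ (mem_shiftSet_trans D rfl (shiftSet_mono D hV b hC)) hY g) f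

end TS

end Stmt13Aux


/-- transitivity of `≤` on `[m-ℋ[m], m-ℋ]`: if `ℰ₁, ℰ₂, ℰ₃` are
`m`-extended hearts with `ℰᵢ ≤ m-ℋ`, `ℰ₁ ≤ ℰ₂` and `ℰ₂ ≤ ℰ₃`, then `ℰ₁ ≤ ℰ₃`. -/
theorem stmt13 (L G : Set D) (hU : IsTStructure D L G) (m : ℤ) (hm : 1 ≤ m)
    (H : Set D) (hH : H = shiftSet D G (m - 1) ∩ L)
    (E₁ E₂ E₃ : Set D)
    (h₁ : IsExtendedHeart D m E₁) (h₂ : IsExtendedHeart D m E₂)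
    (h₃ : IsExtendedHeart D m E₃)
    (h₁H : extHeartLE D m E₁ H) (h₂H : extHeartLE D m E₂ H) (h₃H : extHeartLE D m E₃ H)
    (h12 : extHeartLE D m E₁ E₂) (h23 : extHeartLE D m E₂ E₃) :
    extHeartLE D m E₁ E₃ := by
  open Stmt13Aux in
  obtain ⟨L₁, G₁, ht₁, hE₁⟩ := h₁
  obtain ⟨L₃, G₃, ht₃, hE₃⟩ := h₃
  have ht₁' : IsTStructureOn D Set.univ L₁ G₁ := ht₁
  have ht₃' : IsTStructureOn D Set.univ L₃ G₃ := ht₃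
  subst hE₁ hE₃
  -- basic subset facts
  have hE1G : (shiftSet D G₁ (m - 1) ∩ L₁) ⊆ shiftSet D G₁ (m - 1) := Set.inter_subset_left
  have hE1L : (shiftSet D G₁ (m - 1) ∩ L₁) ⊆ L₁ := Set.inter_subset_right
  have hE3G : (shiftSet D G₃ (m - 1) ∩ L₃) ⊆ shiftSet D G₃ (m - 1) := Set.inter_subset_left
  have hE3L : (shiftSet D G₃ (m - 1) ∩ L₃) ⊆ L₃ := Set.inter_subset_right
  have hE1neg : shiftSet D (shiftSet D G₁ (m - 1) ∩ L₁) (-m) ⊆ shiftSet D G₁ (-1) :=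
    (shiftSet_mono D hE1G (-m)).trans (shiftSet_collapse D (show m - 1 + -m = (-1 : ℤ) by ring))
  have hE3neg : shiftSet D (shiftSet D G₃ (m - 1) ∩ L₃) (-m) ⊆ shiftSet D G₃ (-1) :=
    (shiftSet_mono D hE3G (-m)).trans (shiftSet_collapse D (show m - 1 + -m = (-1 : ℤ) by ring))
  have hE1negL : shiftSet D (shiftSet D G₁ (m - 1) ∩ L₁) (-m) ⊆ shiftSet D L₁ (-m) :=
    shiftSet_mono D hE1L (-m)
  have hE1zeroL : (shiftSet D G₁ (m - 1) ∩ L₁) ⊆ shiftSet D L₁ 0 :=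
    fun x hx => mem_shiftSet_zero D (hE1L hx)
  have hE3mL : shiftSet D (shiftSet D G₃ (m - 1) ∩ L₃) m ⊆ shiftSet D L₃ m :=
    shiftSet_mono D hE3L m
  have hE3zeroL : (shiftSet D G₃ (m - 1) ∩ L₃) ⊆ shiftSet D L₃ 0 :=
    fun x hx => mem_shiftSet_zero D (hE3L hx)
  -- derived vanishing lemmas
  have R3 : ∀ a b : ℤ, m - 1 + b < a → -1 + b < a →
      homZero D (shiftSet D L₃ a) (shiftSet D H b) :=
    fun a b hab1 hab2 => patA D ht₃' h₃H.2 hE3G hE3neg hab1 hab2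
  have Q23 : ∀ a b : ℤ, b < m + a → b < 0 + a →
      homZero D (shiftSet D E₂ a) (shiftSet D G₃ b) :=
    fun a b hab1 hab2 => patB D ht₃' h23.1 hE3mL hE3zeroL hab1 hab2
  have R12 : ∀ a b : ℤ, m - 1 + b < a → -1 + b < a →
      homZero D (shiftSet D L₁ a) (shiftSet D E₂ b) :=
    fun a b hab1 hab2 => patA D ht₁' h12.2 hE1G hE1neg hab1 hab2
  have R4 : ∀ b c : ℤ, c < 0 + b → c < -m + b →
      homZero D (shiftSet D H b) (shiftSet D G₁ c) :=
    fun b c hbc1 hbc2 => patB D ht₁' h₁H.2 hE1zeroL hE1negL hbc1 hbc2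
  have vanB : homZero D (shiftSet D G₁ (m - 1) ∩ L₁) (shiftSet D G₃ (-1)) := by
    intro A hA Z hZ f
    exact homZero_from_star D (h12.1 hA)
      (fun B hB g => Q23 m (-1) (by omega) (by omega) B hB Z hZ g)
      (fun C hC g => Q23 0 (-1) (by omega) (by omega) C (mem_shiftSet_zero D hC) Z hZ g) f
  have vanC : homZero D (shiftSet D L₁ m) (shiftSet D G₃ (m - 1) ∩ L₃) := by
    intro X hX A hA f
    exact homZero_into_star D (h23.2 hA)
      (fun B hB g => R12 m 0 (by omega) (by omega) X hX B (mem_shiftSet_zero D hB) g)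
      (fun C hC g => R12 m (-m) (by omega) (by omega) X hX C hC g) f
  have vanD : homZero D (shiftSet D G₃ (m - 1) ∩ L₃) (shiftSet D G₁ (-m - 1)) := by
    intro A hA Z hZ f
    exact homZero_from_star D (h₃H.1 hA)
      (fun B hB g => R4 m (-m - 1) (by omega) (by omega) B hB Z hZ g)
      (fun C hC g => R4 0 (-m - 1) (by omega) (by omega) C (mem_shiftSet_zero D hC) Z hZ g) f
  have vanE : homZero D (shiftSet D L₃ (m + m)) (shiftSet D G₁ (m - 1) ∩ L₁) := by
    intro X hX A hA f
    exact homZero_into_star D (h₁H.1 hA)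
      (fun B hB g => R3 (m + m) m (by omega) (by omega) X hX B hB g)
      (fun C hC g => R3 (m + m) 0 (by omega) (by omega) X hX C (mem_shiftSet_zero D hC) g) f
  constructor
  · -- E₁ ⊆ E₃[m] * E₃
    intro A hA
    obtain ⟨B, C, u, v, w, hB, hC, hd⟩ := cover_at D ht₃' A m
    have hCL : C ∈ L₃ := by
      apply charL D ht₃'
      intro Y' hY' φ
      obtain ⟨ψ, hψ⟩ := Triangle.yoneda_exact₃ _ hd φ (vanB A hA Y' hY' (v ≫ φ))
      rw [hψ, orthGen D ht₃' (show (-1 : ℤ) < m + 1 by omega)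
        (shift_mem_shiftSet D 1 rfl hB) hY' ψ]; exact comp_zero
    obtain ⟨B₀, hB₀L, ⟨e⟩⟩ := hB
    have ε : (B₀⟦(-m : ℤ)⟧)⟦(m : ℤ)⟧ ≅ B₀ :=
      ((shiftFunctorAdd' D (-m) m 0 (by ring)).app B₀).symm ≪≫ (shiftFunctorZero D ℤ).app B₀
    have hB₀G : B₀⟦(-m : ℤ)⟧ ∈ shiftSet D G₃ (-1) := by
      apply charG D ht₃'
      intro X hX f
      have hmem : (X⟦(m : ℤ)⟧)⟦(m : ℤ)⟧ ∈ shiftSet D L₃ (m + m) :=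
        shift_mem_shiftSet D m rfl (mem_shiftSet_of D hX m)
      have h1 : ((shiftFunctor D m).map ((shiftFunctor D m).map f ≫ ε.hom) ≫ e.inv) ≫ u = 0 :=
        vanE _ hmem A hA _
      obtain ⟨s, hs⟩ := Triangle.coyoneda_exact₂ _ (inv_rot_of_distTriang _ hd)
        ((shiftFunctor D m).map ((shiftFunctor D m).map f ≫ ε.hom) ≫ e.inv) h1
      rw [orthGen D ht₃' (show m - 2 < m + m by omega) hmem
        (shift_mem_shiftSet D (-1) (show m - 1 + -1 = m - 2 by ring) hC) s] at hs; replace hs : (shiftFunctor D m).map ((shiftFunctor D m).map f ≫ ε.hom) ≫ e.inv = 0 := hs.trans zero_comp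
      have h2 : (shiftFunctor D m).map ((shiftFunctor D m).map f ≫ ε.hom) = 0 := by
        calc (shiftFunctor D m).map ((shiftFunctor D m).map f ≫ ε.hom)
            = ((shiftFunctor D m).map ((shiftFunctor D m).map f ≫ ε.hom) ≫ e.inv) ≫ e.hom := by
              simp
        _ = 0 := by rw [hs, zero_comp]
      have h3 : (shiftFunctor D m).map f ≫ ε.hom = 0 := mapZero D m h2
      have h4 : (shiftFunctor D m).map f = 0 := by
        calc (shiftFunctor D m).map f
            = ((shiftFunctor D m).map f ≫ ε.hom) ≫ ε.inv := by simp
        _ = 0 := by rw [h3, zero_comp]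
      exact mapZero D m h4
    obtain ⟨Y₀, hY₀, ⟨e'⟩⟩ := hB₀G
    have hB₀E : B₀ ∈ shiftSet D G₃ (m - 1) ∩ L₃ :=
      ⟨⟨Y₀, hY₀, ⟨ε.symm ≪≫ (shiftFunctor D (m : ℤ)).mapIso e' ≪≫
        ((shiftFunctorAdd' D (-1) m (m - 1) (by ring)).app Y₀).symm⟩⟩, hB₀L⟩
    exact ⟨B, C, u, v, w, ⟨B₀, hB₀E, ⟨e⟩⟩, ⟨hC, hCL⟩, hd⟩
  · -- E₃ ⊆ E₁ * E₁[-m]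
    intro A hA
    obtain ⟨B, C, u, v, w, hB, hC, hd⟩ := ht₁'.cover A (Set.mem_univ A)
    have εB : (B⟦(-m : ℤ)⟧)⟦(m : ℤ)⟧ ≅ B :=
      ((shiftFunctorAdd' D (-m) m 0 (by ring)).app B).symm ≪≫ (shiftFunctorZero D ℤ).app B
    have hBG : B⟦(-m : ℤ)⟧ ∈ shiftSet D G₁ (-1) := by
      apply charG D ht₁'
      intro X hX f
      have h1 : ((shiftFunctor D m).map f ≫ εB.hom) ≫ u = 0 :=
        vanC _ (mem_shiftSet_of D hX m) A hA _
      obtain ⟨s, hs⟩ := Triangle.coyoneda_exact₂ _ (inv_rot_of_distTriang _ hd)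
        ((shiftFunctor D m).map f ≫ εB.hom) h1
      rw [orthGen D ht₁' (show (-2 : ℤ) < m by omega) (mem_shiftSet_of D hX m)
        (shift_mem_shiftSet D (-1) (show (-1 : ℤ) + -1 = -2 by ring) hC) s] at hs; replace hs : (shiftFunctor D m).map f ≫ εB.hom = 0 := hs.trans zero_comp
      have h2 : (shiftFunctor D m).map f = 0 := by
        calc (shiftFunctor D m).map f
            = ((shiftFunctor D m).map f ≫ εB.hom) ≫ εB.inv := by simp
        _ = 0 := by rw [hs, zero_comp]
      exact mapZero D m h2
    obtain ⟨Y₀, hY₀, ⟨e'⟩⟩ := hBG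
    have hBE : B ∈ shiftSet D G₁ (m - 1) ∩ L₁ :=
      ⟨⟨Y₀, hY₀, ⟨εB.symm ≪≫ (shiftFunctor D (m : ℤ)).mapIso e' ≪≫
        ((shiftFunctorAdd' D (-1) m (m - 1) (by ring)).app Y₀).symm⟩⟩, hB⟩
    have eC : C ≅ (C⟦(m : ℤ)⟧)⟦(-m : ℤ)⟧ :=
      ((shiftFunctorZero D ℤ).app C).symm ≪≫ (shiftFunctorAdd' D m (-m) 0 (by ring)).app C
    have hCmG : C⟦(m : ℤ)⟧ ∈ shiftSet D G₁ (m - 1) :=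
      shift_mem_shiftSet D m (show (-1 : ℤ) + m = m - 1 by ring) hC
    have hCmL : C⟦(m : ℤ)⟧ ∈ L₁ := by
      apply charL D ht₁'
      intro Y' hY' ψ
      have hY'' : Y'⟦(-m : ℤ)⟧ ∈ shiftSet D G₁ (-m - 1) :=
        shift_mem_shiftSet D (-m) (show (-1 : ℤ) + -m = -m - 1 by ring) hY'
      have hv : v ≫ (eC.hom ≫ (shiftFunctor D (-m)).map ψ) = 0 :=
        vanD A hA _ hY'' _
      obtain ⟨ψ₂, hψ₂⟩ := Triangle.yoneda_exact₃ _ hd (eC.hom ≫ (shiftFunctor D (-m)).map ψ) hv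
      rw [orthGen D ht₁' (show -m - 1 < (1 : ℤ) by omega) (mem_shiftSet_of D hB 1) hY'' ψ₂] at hψ₂
      replace hψ₂ : eC.hom ≫ (shiftFunctor D (-m)).map ψ = 0 := hψ₂.trans comp_zero
      have h2 : (shiftFunctor D (-m)).map ψ = 0 := by
        calc (shiftFunctor D (-m)).map ψ
            = eC.inv ≫ (eC.hom ≫ (shiftFunctor D (-m)).map ψ) := by simp
        _ = 0 := by rw [hψ₂, comp_zero]
      exact mapZero D (-m) h2
    exact ⟨B, C, u, v, w, hBE, ⟨C⟦(m : ℤ)⟧, ⟨hCmG, hCmL⟩, ⟨eC⟩⟩, hd⟩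
end

section
/- Let D be a triangulated category, m a positive integer, and let ℰ and ℋ' be m-extended hearts on D such that ℰ ≤ ℋ' (i.e. ℰ ⊆ ℋ'[m] * ℋ' and ℋ' ⊆ ℰ * ℰ[-m]). Then (ℋ' ∩ ℰ, ℋ' ∩ ℰ[-m]) is an s-torsion pair in ℋ'. -/
open CategoryTheory Category Limits Pretriangulated

universe v u

variable (D : Type u) [Category.{v} D] [Preadditive D] [HasZeroObject D]
  [HasShift D ℤ] [∀ n : ℤ, (shiftFunctor D n).Additive]
  [Pretriangulated D] [HasBinaryBiproducts D]

section Aux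

set_option linter.unusedSectionVars false

variable {D}

lemma isoClosed_shiftSet (S : Set D) (n : ℤ) : isoClosed D (shiftSet D S n) := by
  rintro A B e ⟨C, hC, ⟨e'⟩⟩
  exact ⟨C, hC, ⟨e.symm ≪≫ e'⟩⟩

lemma mem_shiftSet {S : Set D} {A : D} (hA : A ∈ S) (n : ℤ) : A⟦n⟧ ∈ shiftSet D S n :=
  ⟨A, hA, ⟨Iso.refl _⟩⟩

lemma shiftSet_mono {S T : Set D} (h : S ⊆ T) (n : ℤ) : shiftSet D S n ⊆ shiftSet D T n := by
  rintro A ⟨B, hB, e⟩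
  exact ⟨B, h hB, e⟩

lemma shiftSet_shiftSet (S : Set D) (a b : ℤ) :
    shiftSet D (shiftSet D S a) b = shiftSet D S (a + b) := by
  ext A
  constructor
  · rintro ⟨C, ⟨B, hB, ⟨e'⟩⟩, ⟨e⟩⟩
    exact ⟨B, hB, ⟨e ≪≫ (shiftFunctor D b).mapIso e' ≪≫ (shiftAdd B a b).symm⟩⟩
  · rintro ⟨B, hB, ⟨e⟩⟩
    exact ⟨B⟦a⟧, mem_shiftSet hB a, ⟨e ≪≫ shiftAdd B a b⟩⟩

lemma shiftSet_zero_subset {S : Set D} (h : isoClosed D S) : shiftSet D S 0 ⊆ S := by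
  rintro A ⟨B, hB, ⟨e⟩⟩
  exact h (e ≪≫ shiftZero ℤ B).symm hB

lemma mem_shiftSet_of_shift {S : Set D} {A : D} {n : ℤ} (h : A⟦-n⟧ ∈ S) :
    A ∈ shiftSet D S n :=
  ⟨A⟦-n⟧, h, ⟨(shiftNegShift A n).symm⟩⟩

lemma shift_mem_of_mem_shiftSet {S : Set D} (hS : isoClosed D S) {A : D} {n : ℤ}
    (h : A ∈ shiftSet D S n) : A⟦-n⟧ ∈ S := by
  obtain ⟨B, hB, ⟨e⟩⟩ := h
  exact hS ((shiftFunctor D (-n)).mapIso e ≪≫ shiftShiftNeg B n).symm hB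

/-- A "nice class": closed under isomorphisms, containing zero objects, closed under
extensions and under direct summands. -/
structure NiceClass (P : Set D) : Prop where
  iso : isoClosed D P
  zero : ∀ Z : D, IsZero Z → Z ∈ P
  ext₂ : ∀ T : Triangle D, (T ∈ distTriang D) → T.obj₁ ∈ P → T.obj₃ ∈ P → T.obj₂ ∈ P
  summand : ∀ A ∈ P, ∀ (X : D) (i : X ⟶ A) (p : A ⟶ X), i ≫ p = 𝟙 X → X ∈ P

lemma NiceClass.sum {P : Set D} (h : NiceClass P) {A B : D} (hA : A ∈ P) (hB : B ∈ P) :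
    (A ⊞ B) ∈ P :=
  h.ext₂ _ (binaryBiproductTriangle_distinguished A B) hA hB

lemma NiceClass.inter {P Q : Set D} (hP : NiceClass P) (hQ : NiceClass Q) :
    NiceClass (P ∩ Q) where
  iso := fun A B e hA => ⟨hP.iso e hA.1, hQ.iso e hA.2⟩
  zero := fun Z hZ => ⟨hP.zero Z hZ, hQ.zero Z hZ⟩
  ext₂ := fun T hT h1 h3 => ⟨hP.ext₂ T hT h1.1 h3.1, hQ.ext₂ T hT h1.2 h3.2⟩
  summand := fun A hA X i p hip =>
    ⟨hP.summand A hA.1 X i p hip, hQ.summand A hA.2 X i p hip⟩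

lemma NiceClass.shift {P : Set D} (h : NiceClass P) (n : ℤ) : NiceClass (shiftSet D P n) where
  iso := isoClosed_shiftSet P n
  zero := fun Z hZ => mem_shiftSet_of_shift (h.zero _ ((shiftFunctor D (-n)).map_isZero hZ))
  ext₂ := by
    intro T hT h1 h3
    have hT' := Triangle.shift_distinguished T hT (-n)
    refine mem_shiftSet_of_shift (h.ext₂ _ hT' ?_ ?_)
    · exact shift_mem_of_mem_shiftSet h.iso h1
    · exact shift_mem_of_mem_shiftSet h.iso h3
  summand := by
    intro A hA X i p hip
    refine mem_shiftSet_of_shift (h.summand (A⟦-n⟧) (shift_mem_of_mem_shiftSet h.iso hA)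
      (X⟦-n⟧) (i⟦-n⟧') (p⟦-n⟧') ?_)
    rw [← Functor.map_comp, hip, CategoryTheory.Functor.map_id]

section TStr

variable {L G : Set D} (ht : IsTStructure D L G)
include ht

lemma TS.isoL : isoClosed D L := fun _ _ e hA => ht.isoL e hA trivial

lemma TS.isoG : isoClosed D G := fun _ _ e hA => ht.isoG e hA trivial

lemma TS.shiftL_nat (k : ℕ) : shiftSet D L (k : ℤ) ⊆ L := by
  induction k with
  | zero => exact shiftSet_zero_subset (TS.isoL ht)
  | succ k ih =>
    have h1 : shiftSet D L 1 ⊆ L := by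
      have := shiftSet_mono ht.shiftL (1 : ℤ)
      rw [shiftSet_shiftSet] at this
      exact fun A hA => shiftSet_zero_subset (TS.isoL ht) (this hA)
    have : ((k : ℤ) + 1) = ((k + 1 : ℕ) : ℤ) := by push_cast; ring
    rw [← this, ← shiftSet_shiftSet]
    exact fun A hA => h1 (shiftSet_mono ih 1 hA)

lemma TS.shiftL_le {a b : ℤ} (hab : a ≤ b) : shiftSet D L b ⊆ shiftSet D L a := by
  have h : shiftSet D (shiftSet D L (b - a)) a = shiftSet D L b := by
    rw [shiftSet_shiftSet]; congr 1; ring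
  rw [← h]
  refine shiftSet_mono ?_ a
  have : b - a = ((b - a).toNat : ℤ) := by omega
  rw [this]
  exact TS.shiftL_nat ht _

lemma TS.shiftL_nonneg {k : ℤ} (hk : 0 ≤ k) : shiftSet D L k ⊆ L := by
  intro A hA
  exact shiftSet_zero_subset (TS.isoL ht) (TS.shiftL_le ht hk hA)

lemma TS.shiftG_nat (k : ℕ) : shiftSet D G (-(k : ℤ)) ⊆ G := by
  induction k with
  | zero => simpa using shiftSet_zero_subset (TS.isoG ht)
  | succ k ih =>
    have : (-(((k : ℕ) + 1 : ℕ) : ℤ)) = (-(k : ℤ)) + (-1) := by push_cast; ring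
    rw [this, ← shiftSet_shiftSet]
    exact fun A hA => ht.shiftG (shiftSet_mono ih (-1) hA)

lemma TS.shiftG_le {a b : ℤ} (hab : a ≤ b) : shiftSet D G a ⊆ shiftSet D G b := by
  have h : shiftSet D (shiftSet D G (a - b)) b = shiftSet D G a := by
    rw [shiftSet_shiftSet]; congr 1; ring
  rw [← h]
  refine shiftSet_mono ?_ b
  have : a - b = -(((b - a).toNat : ℤ)) := by omega
  rw [this]
  exact TS.shiftG_nat ht _

lemma TS.shift_one_mem {A : D} (hA : A ∈ L) : A⟦(1 : ℤ)⟧ ∈ L :=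
  TS.shiftL_nonneg ht (by norm_num) (mem_shiftSet hA 1)

/-- detection lemma for `L`. -/
lemma TS.memL {X : D} (h : ∀ C ∈ shiftSet D G (-1), ∀ f : X ⟶ C, f = 0) : X ∈ L := by
  obtain ⟨B, C, f, g, hh, hB, hC, hdist⟩ := ht.cover X trivial
  have hg : g = 0 := h C hC g
  obtain ⟨v, hv⟩ := Triangle.yoneda_exact₂ _ (rot_of_distTriang _ hdist) (𝟙 C)
    (by simp [hg]; exact zero_comp)
  have hv0 : v = 0 := ht.hom_zero _ (TS.shift_one_mem ht hB) C hC v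
  have hC0 : IsZero C := by
    rw [IsZero.iff_id_eq_zero, hv, hv0, comp_zero]; rfl
  have : IsIso f := (Triangle.isZero₃_iff_isIso₁ _ hdist).1 hC0
  exact TS.isoL ht (asIso f) hB

/-- detection lemma for `G[-1]`. -/
lemma TS.memG' {X : D} (h : ∀ B ∈ L, ∀ f : B ⟶ X, f = 0) : X ∈ shiftSet D G (-1) := by
  obtain ⟨B, C, f, g, hh, hB, hC, hdist⟩ := ht.cover X trivial
  have hf : f = 0 := h B hB f
  obtain ⟨v, hv⟩ := Triangle.coyoneda_exact₂ _ (inv_rot_of_distTriang _ hdist) (𝟙 B)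
    (by simp [hf]; exact comp_zero)
  have hC' : C⟦(-1 : ℤ)⟧ ∈ shiftSet D G (-1) := by
    refine TS.shiftG_le ht (by norm_num : (-2 : ℤ) ≤ -1) ?_
    have : shiftSet D (shiftSet D G (-1)) (-1) = shiftSet D G (-2) := by
      rw [shiftSet_shiftSet]; norm_num
    rw [← this]
    exact mem_shiftSet hC (-1)
  have hv0 : v = 0 := ht.hom_zero B hB _ hC' v
  have hB0 : IsZero B := by
    rw [IsZero.iff_id_eq_zero, hv, hv0, zero_comp]; rfl
  have : IsIso g := (Triangle.isZero₁_iff_isIso₂ _ hdist).1 hB0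
  exact isoClosed_shiftSet G (-1) (asIso g).symm hC

lemma TS.ncL : NiceClass L where
  iso := TS.isoL ht
  zero := fun Z hZ => TS.memL ht (fun C _ f => hZ.eq_of_src f 0)
  ext₂ := by
    intro T hT h1 h3
    refine TS.memL ht (fun C hC f => ?_)
    obtain ⟨g, hg⟩ := Triangle.yoneda_exact₂ _ hT f (ht.hom_zero _ h1 C hC _)
    rw [hg, ht.hom_zero _ h3 C hC g, comp_zero]
  summand := by
    intro A hA X i p hip
    refine TS.memL ht (fun C hC f => ?_)
    have : f = i ≫ (p ≫ f) := by rw [← assoc, hip, id_comp]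
    rw [this, ht.hom_zero A hA C hC (p ≫ f), comp_zero]

lemma TS.ncG' : NiceClass (shiftSet D G (-1)) where
  iso := isoClosed_shiftSet G (-1)
  zero := fun Z hZ => TS.memG' ht (fun B _ f => hZ.eq_of_tgt f 0)
  ext₂ := by
    intro T hT h1 h3
    refine TS.memG' ht (fun B hB f => ?_)
    obtain ⟨g, hg⟩ := Triangle.coyoneda_exact₂ _ hT f (ht.hom_zero B hB _ h3 _)
    rw [hg, ht.hom_zero B hB _ h1 g, zero_comp]
  summand := by
    intro A hA X i p hip
    refine TS.memG' ht (fun B hB f => ?_)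
    have : f = (f ≫ i) ≫ p := by rw [assoc, hip, comp_id]
    rw [this, ht.hom_zero B hB A hA (f ≫ i), zero_comp]

lemma TS.ncG_shift (n : ℤ) : NiceClass (shiftSet D G n) := by
  have := (TS.ncG' ht).shift (n + 1)
  rwa [shiftSet_shiftSet, show (-1) + (n + 1) = n by ring] at this

lemma TS.ncL_shift (n : ℤ) : NiceClass (shiftSet D L n) := (TS.ncL ht).shift n

end TStr

end Aux

/-- Lemma 4.7: if `ℰ` and `ℋ'` are `m`-extended hearts on `D` with
`ℰ ≤ ℋ'`, then `(ℋ' ∩ ℰ, ℋ' ∩ ℰ[-m])` is an `s`-torsion pair in `ℋ'`. -/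
theorem stmt14 (m : ℤ) (hm : 1 ≤ m) (E H' : Set D)
    (hE : IsExtendedHeart D m E) (hH' : IsExtendedHeart D m H')
    (hle : extHeartLE D m E H') :
    IsSTorsionPairIn D H' (H' ∩ E) (H' ∩ shiftSet D E (-m)) := by
  obtain ⟨LE, GE, htE, rfl⟩ := hE
  obtain ⟨L, G, ht, rfl⟩ := hH'
  set E := shiftSet D GE (m - 1) ∩ LE with hEdef
  set H' := shiftSet D G (m - 1) ∩ L with hH'def
  -- Nice classes
  have ncE : NiceClass E := (TS.ncG_shift htE (m - 1)).inter (TS.ncL htE)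
  have ncH' : NiceClass H' := (TS.ncG_shift ht (m - 1)).inter (TS.ncL ht)
  have ncEm : NiceClass (shiftSet D E (-m)) := ncE.shift (-m)
  have ncT : NiceClass (H' ∩ E) := ncH'.inter ncE
  have ncF : NiceClass (H' ∩ shiftSet D E (-m)) := ncH'.inter ncEm
  -- E[-m] ⊆ GE[-1]
  have hFsub : shiftSet D E (-m) ⊆ shiftSet D GE (-1) := by
    intro B hB
    have h1 : shiftSet D E (-m) ⊆ shiftSet D (shiftSet D GE (m - 1)) (-m) :=
      shiftSet_mono Set.inter_subset_left (-m)
    have h2 : shiftSet D (shiftSet D GE (m - 1)) (-m) = shiftSet D GE (-1) := by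
      rw [shiftSet_shiftSet, show m - 1 + (-m) = -1 by ring]
    rw [← h2]; exact h1 hB
  -- hom_zero
  have hhz : homZero D (H' ∩ E) (H' ∩ shiftSet D E (-m)) := by
    intro A hA B hB f
    exact htE.hom_zero A hA.2.2 B (hFsub hB.2) f
  -- neg_hom_zero
  have hnhz : ∀ A ∈ H' ∩ E, ∀ B ∈ H' ∩ shiftSet D E (-m), ∀ f : A ⟶ B⟦(-1 : ℤ)⟧, f = 0 := by
    intro A hA B hB f
    have hB1 : B⟦(-1 : ℤ)⟧ ∈ shiftSet D GE (-1) := by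
      refine TS.shiftG_le htE (by norm_num : (-2 : ℤ) ≤ -1) ?_
      have : shiftSet D (shiftSet D GE (-1)) (-1) = shiftSet D GE (-2) := by
        rw [shiftSet_shiftSet]; norm_num
      rw [← this]
      exact mem_shiftSet (hFsub hB.2) (-1)
    exact htE.hom_zero A hA.2.2 _ hB1 f
  -- E ⊆ L and E ⊆ G[2m-1]
  have hEL : E ⊆ L := by
    intro x hx
    obtain ⟨P, Q, f, g, hh, hP, hQ, hdist⟩ := hle.1 hx
    have hPL : P ∈ L := by
      refine TS.shiftL_nonneg ht (k := m) (by omega) ?_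
      exact shiftSet_mono Set.inter_subset_right m hP
    exact (TS.ncL ht).ext₂ _ hdist hPL hQ.2
  have hEG : E ⊆ shiftSet D G (2 * m - 1) := by
    intro x hx
    obtain ⟨P, Q, f, g, hh, hP, hQ, hdist⟩ := hle.1 hx
    have hPG : P ∈ shiftSet D G (2 * m - 1) := by
      have h1 : shiftSet D H' m ⊆ shiftSet D (shiftSet D G (m - 1)) m :=
        shiftSet_mono Set.inter_subset_left m
      have h2 : shiftSet D (shiftSet D G (m - 1)) m = shiftSet D G (2 * m - 1) := by
        rw [shiftSet_shiftSet, show m - 1 + m = 2 * m - 1 by ring]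
      rw [← h2]; exact h1 hP
    have hQG : Q ∈ shiftSet D G (2 * m - 1) :=
      TS.shiftG_le ht (a := m - 1) (b := 2 * m - 1) (by omega) hQ.1
    exact (TS.ncG_shift ht (2 * m - 1)).ext₂ _ hdist hPG hQG
  -- cover
  have hcover : ∀ A ∈ H', A ∈ starSet D (H' ∩ E) (H' ∩ shiftSet D E (-m)) := by
    intro A hA
    obtain ⟨X, Y, f, g, hh, hX, hY, hdist⟩ := hle.2 hA
    have hXL : X ∈ L := hEL hX
    have hYG : Y ∈ shiftSet D G (m - 1) := by
      have h1 : shiftSet D E (-m) ⊆ shiftSet D (shiftSet D G (2 * m - 1)) (-m) :=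
        shiftSet_mono hEG (-m)
      have h2 : shiftSet D (shiftSet D G (2 * m - 1)) (-m) = shiftSet D G (m - 1) := by
        rw [shiftSet_shiftSet, show 2 * m - 1 + (-m) = m - 1 by ring]
      rw [← h2]; exact h1 hY
    have hXG : X ∈ shiftSet D G (m - 1) := by
      have hY1 : Y⟦(-1 : ℤ)⟧ ∈ shiftSet D G (m - 1) := by
        refine TS.shiftG_le ht (by omega : m - 2 ≤ m - 1) ?_
        have : shiftSet D (shiftSet D G (m - 1)) (-1) = shiftSet D G (m - 2) := by
          rw [shiftSet_shiftSet, show m - 1 + (-1) = m - 2 by ring]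
        rw [← this]
        exact mem_shiftSet hYG (-1)
      exact (TS.ncG_shift ht (m - 1)).ext₂ _ (inv_rot_of_distTriang _ hdist) hY1 hA.1
    have hYL : Y ∈ L := by
      have hX1 : X⟦(1 : ℤ)⟧ ∈ L := TS.shift_one_mem ht hXL
      exact (TS.ncL ht).ext₂ _ (rot_of_distTriang _ hdist) hA.2 hX1
    exact ⟨X, Y, f, g, hh, ⟨⟨hXG, hXL⟩, hX⟩, ⟨⟨hYG, hYL⟩, hY⟩, hdist⟩
  exact
    { subT := Set.inter_subset_left
      subF := Set.inter_subset_left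
      isoT := fun A B e hA hB => ⟨hB, ncE.iso e hA.2⟩
      isoF := fun A B e hA hB => ⟨hB, ncEm.iso e hA.2⟩
      zeroT := fun Z hZ hZH => ⟨hZH, ncE.zero Z hZ⟩
      zeroF := fun Z hZ hZH => ⟨hZH, ncEm.zero Z hZ⟩
      sumT := fun A hA B hB => ncT.sum hA hB
      sumF := fun A hA B hB => ncF.sum hA hB
      summandT := fun A hA X i p hip _ => ncT.summand A hA X i p hip
      summandF := fun A hA X i p hip _ => ncF.summand A hA X i p hip
      hom_zero := hhz
      cover := hcover
      neg_hom_zero := hnhz }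
end

section
/- Let D be a triangulated category with a t-structure 𝒰 = (U^{≤0}, U^{≥0}), let m be a positive integer, and set m-ℋ = U^{≥-(m-1)} ∩ U^{≤0}. If (𝒯,ℱ) is an s-torsion pair in m-ℋ, then ℱ[m] * 𝒯 ⊆ m-ℋ[m] * m-ℋ and m-ℋ ⊆ (ℱ[m] * 𝒯) * ((ℱ[m] * 𝒯)[-m]). -/
open CategoryTheory Category Limits Pretriangulated

universe v u

variable (D : Type u) [Category.{v} D] [Preadditive D] [HasZeroObject D]
  [HasShift D ℤ] [∀ n : ℤ, (shiftFunctor D n).Additive]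
  [Pretriangulated D] [HasBinaryBiproducts D]

open ZeroObject

/-- Example 4.5: if `(𝒯,ℱ)` is an `s`-torsion pair in `m-ℋ`, then
`ℱ[m] * 𝒯 ⊆ m-ℋ[m] * m-ℋ` and `m-ℋ ⊆ (ℱ[m] * 𝒯) * ((ℱ[m] * 𝒯)[-m])`. -/
theorem stmt16 (L G : Set D) (hU : IsTStructure D L G) (m : ℤ) (hm : 1 ≤ m)
    (H : Set D) (hH : H = shiftSet D G (m - 1) ∩ L)
    (T F : Set D) (hTF : IsSTorsionPairIn D H T F) :
    starSet D (shiftSet D F m) T ⊆ starSet D (shiftSet D H m) H ∧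
    H ⊆ starSet D (starSet D (shiftSet D F m) T)
          (shiftSet D (starSet D (shiftSet D F m) T) (-m)) := by
  obtain ⟨subL, subG, isoL, isoG, homLG, coverU, shiftL, shiftG⟩ := hU
  -- every zero object belongs to `H`
  have hZH : ∀ Z : D, IsZero Z → Z ∈ H := by
    intro Z hZ
    obtain ⟨B, C, f, g, h, hB, hC, hd⟩ := coverU Z trivial
    have hIso : IsIso h := ((Triangle.mk f g h).isZero₂_iff_isIso₃ hd).1 hZ
    -- `C ∈ L`
    obtain ⟨B', hB', ⟨e⟩⟩ := shiftL hB
    have eB' : B' ≅ C :=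
      ((shiftFunctorCompIsoId D (-1 : ℤ) (1 : ℤ) (by norm_num)).app B').symm ≪≫
        (shiftFunctor D (1 : ℤ)).mapIso e.symm ≪≫ (asIso h).symm
    have hCL : C ∈ L := isoL eB' hB' trivial
    have hCzero : IsZero C := by
      rw [IsZero.iff_id_eq_zero]
      exact homLG C hCL C hC (𝟙 C)
    -- `Z ∈ L`
    have hBzero : IsZero B := by
      have h1 : IsZero (B⟦(1 : ℤ)⟧) := hCzero.of_iso (asIso h).symm
      have h2 : IsZero (B⟦(1 : ℤ)⟧⟦(-1 : ℤ)⟧) := (shiftFunctor D (-1 : ℤ)).map_isZero h1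
      exact h2.of_iso ((shiftFunctorCompIsoId D (1 : ℤ) (-1 : ℤ) (by norm_num)).app B).symm
    have hZL : Z ∈ L := isoL (hBzero.iso hZ) hB trivial
    -- `Z ∈ G`
    obtain ⟨C', hC', ⟨eC⟩⟩ := hC
    have hC'zero : IsZero C' := by
      have h1 : IsZero (C'⟦(-1 : ℤ)⟧) := hCzero.of_iso eC.symm
      have h2 : IsZero (C'⟦(-1 : ℤ)⟧⟦(1 : ℤ)⟧) := (shiftFunctor D (1 : ℤ)).map_isZero h1
      exact h2.of_iso ((shiftFunctorCompIsoId D (-1 : ℤ) (1 : ℤ) (by norm_num)).app C').symm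
    have hZG : Z ∈ G := isoG (hC'zero.iso hZ) hC' trivial
    have hZGm : Z ∈ shiftSet D G (m - 1) :=
      ⟨Z, hZG, ⟨hZ.iso ((shiftFunctor D (m - 1)).map_isZero hZ)⟩⟩
    rw [hH]
    exact ⟨hZGm, hZL⟩
  have h0H : (0 : D) ∈ H := hZH 0 (isZero_zero D)
  have h0T : (0 : D) ∈ T := hTF.zeroT 0 (isZero_zero D) h0H
  have h0F : (0 : D) ∈ F := hTF.zeroF 0 (isZero_zero D) h0H
  constructor
  · rintro A ⟨B, C, f, g, h, ⟨B', hB', e⟩, hC, hd⟩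
    exact ⟨B, C, f, g, h, ⟨B', hTF.subF hB', e⟩, hTF.subT hC, hd⟩
  · intro X hX
    obtain ⟨B, C, f, g, h, hB, hC, hd⟩ := hTF.cover X hX
    refine ⟨B, C, f, g, h, ?_, ?_, hd⟩
    · exact ⟨0, B, 0, 𝟙 B, 0,
        ⟨0, h0F, ⟨(isZero_zero D).iso ((shiftFunctor D m).map_isZero (isZero_zero D))⟩⟩,
        hB, contractible_distinguished₁ B⟩
    · refine ⟨C⟦m⟧, ?_, ⟨((shiftFunctorCompIsoId D m (-m) (add_neg_cancel m)).app C).symm⟩⟩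
      exact ⟨C⟦m⟧, 0, 𝟙 _, 0, 0, ⟨C, hC, ⟨Iso.refl _⟩⟩, h0T,
        contractible_distinguished (C⟦m⟧)⟩
end

section
/- Let D be a triangulated category with a t-structure 𝒰 = (U^{≤0}, U^{≥0}) with heart ℋ = U^{≤0} ∩ U^{≥0}, let m be a positive integer, and let S be a triangulated full subcategory of D such that ℋ ⊆ S and 𝒰_S = (S ∩ U^{≤0}, S ∩ U^{≥0}) is a t-structure on S. Then the assignments λ(X^{≤0}, X^{≥0}) = (S ∩ X^{≤0}, S ∩ X^{≥0}) and μ(Y^{≤0}, Y^{≥0}) = (U^{≤-m} * Y^{≤0}, Y^{≥0} * U^{≥0}) are mutually inverse, order preserving bijections between the poset of t-structures (X^{≤0}, X^{≥0}) on D with U^{≤-m} ⊆ X^{≤0} ⊆ U^{≤0} and the poset of t-structures (Y^{≤0}, Y^{≥0}) on S with S ∩ U^{≤-m} ⊆ Y^{≤0} ⊆ S ∩ U^{≤0}. -/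
open CategoryTheory Category Limits Pretriangulated

universe v u

variable (D : Type u) [Category.{v} D] [Preadditive D] [HasZeroObject D]
  [HasShift D ℤ] [∀ n : ℤ, (shiftFunctor D n).Additive]
  [Pretriangulated D] [HasBinaryBiproducts D]

namespace Stmt19

set_option linter.unusedSectionVars false

section Aux

variable {D}

/-! ## Basic shift and iso helpers -/

def shiftShiftIso (A : D) (a b c : ℤ) (h : a + b = c) : A⟦a⟧⟦b⟧ ≅ A⟦c⟧ :=
  ((shiftFunctorAdd' D a b c h).app A).symm

def shiftZeroIso (A : D) : A ≅ A⟦(0 : ℤ)⟧ :=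
  ((shiftFunctorZero D ℤ).app A).symm

def negShiftShiftIso (A : D) (n : ℤ) : A ≅ A⟦-n⟧⟦n⟧ :=
  ((shiftFunctorCompIsoId D (-n) n (by ring)).app A).symm

def shiftNegShiftIso (A : D) (n : ℤ) : A ≅ A⟦n⟧⟦-n⟧ :=
  ((shiftFunctorCompIsoId D n (-n) (by ring)).app A).symm

lemma vanish_of_iso {P P' V : D} (e : P ≅ P') (hv : ∀ f : P ⟶ V, f = 0) (g : P' ⟶ V) :
    g = 0 := by
  have : g = e.inv ≫ (e.hom ≫ g) := by simp
  rw [this, hv (e.hom ≫ g), comp_zero]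

lemma hom_zero_of_isos {A A' B B' : D} (eA : A ≅ A') (eB : B ≅ B')
    (h : ∀ f : A' ⟶ B', f = 0) (f : A ⟶ B) : f = 0 := by
  have : f = eA.hom ≫ (eA.inv ≫ f ≫ eB.hom) ≫ eB.inv := by simp
  rw [this, h (eA.inv ≫ f ≫ eB.hom)]; simp

lemma hom_zero_shift {A B : D} (n : ℤ) (h : ∀ f : A ⟶ B, f = 0) (f : A⟦n⟧ ⟶ B⟦n⟧) : f = 0 := by
  have : f = (shiftFunctor D n).map ((shiftFunctor D n).preimage f) := by
    rw [Functor.map_preimage]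
  rw [this, h ((shiftFunctor D n).preimage f), Functor.map_zero]

/-! ## shiftSet membership helpers -/

lemma mem_shiftSet {S : Set D} {A B : D} {n : ℤ} (hB : B ∈ S) (e : A ≅ B⟦n⟧) :
    A ∈ shiftSet D S n := ⟨B, hB, ⟨e⟩⟩

lemma shiftSet_iso {S : Set D} {n : ℤ} {A B : D} (e : A ≅ B) (h : A ∈ shiftSet D S n) :
    B ∈ shiftSet D S n := by
  obtain ⟨C, hC, ⟨e'⟩⟩ := h
  exact ⟨C, hC, ⟨e.symm ≪≫ e'⟩⟩

lemma shiftSet_mono {S T : Set D} (h : S ⊆ T) (n : ℤ) : shiftSet D S n ⊆ shiftSet D T n := by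
  rintro A ⟨B, hB, e⟩
  exact ⟨B, h hB, e⟩

lemma mem_shiftSet_zero {S : Set D} {A : D} (hA : A ∈ S) : A ∈ shiftSet D S 0 :=
  mem_shiftSet hA (shiftZeroIso A)

lemma shift_mem_shiftSet {S : Set D} {A : D} (hA : A ∈ S) (n : ℤ) : A⟦n⟧ ∈ shiftSet D S n :=
  mem_shiftSet hA (Iso.refl _)

lemma shiftSet_shift {S : Set D} {A : D} {n : ℤ} (h : A ∈ shiftSet D S n) (k c : ℤ)
    (hc : n + k = c) : A⟦k⟧ ∈ shiftSet D S c := by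
  obtain ⟨B, hB, ⟨e⟩⟩ := h
  exact mem_shiftSet hB (((shiftFunctor D k).mapIso e).trans (shiftShiftIso B n k c hc))

/-! ## distinguished triangle helpers -/

lemma dist_iso_mid {X A A' Z : D} {f : X ⟶ A} {g : A ⟶ Z} {h : Z ⟶ X⟦(1:ℤ)⟧}
    (hd : Triangle.mk f g h ∈ distTriang D) (e : A ≅ A') :
    Triangle.mk (f ≫ e.hom) (e.inv ≫ g) h ∈ distTriang D := by
  refine isomorphic_distinguished _ hd _ ?_
  refine Triangle.isoMk _ _ (Iso.refl _) e.symm (Iso.refl _) ?_ ?_ ?_ <;> simp [Triangle.mk]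

lemma dist_shift {X Y Z : D} {f : X ⟶ Y} {g : Y ⟶ Z} {h : Z ⟶ X⟦(1:ℤ)⟧}
    (hd : Triangle.mk f g h ∈ distTriang D) (n : ℤ) :
    Triangle.mk ((n.negOnePow • f⟦n⟧' : X⟦n⟧ ⟶ Y⟦n⟧)) (n.negOnePow • g⟦n⟧')
      (n.negOnePow • h⟦n⟧' ≫ (shiftFunctorComm D 1 n).hom.app X) ∈ distTriang D :=
  Triangle.shift_distinguished _ hd n

lemma starSet_iso {X Y : Set D} {A B : D} (e : A ≅ B) (h : A ∈ starSet D X Y) :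
    B ∈ starSet D X Y := by
  obtain ⟨P, Q, f, g, hh, hP, hQ, hd⟩ := h
  exact ⟨P, Q, f ≫ e.hom, e.inv ≫ g, hh, hP, hQ, dist_iso_mid hd e⟩

lemma starSet_mono {X X' Y Y' : Set D} (hX : X ⊆ X') (hY : Y ⊆ Y') :
    starSet D X Y ⊆ starSet D X' Y' := by
  rintro A ⟨P, Q, f, g, h, hP, hQ, hd⟩
  exact ⟨P, Q, f, g, h, hX hP, hY hQ, hd⟩

lemma shiftSet_starSet {X Y : Set D} (n : ℤ) :
    shiftSet D (starSet D X Y) n ⊆ starSet D (shiftSet D X n) (shiftSet D Y n) := by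
  rintro A ⟨Z, ⟨B, C, f, g, h, hB, hC, hd⟩, ⟨e⟩⟩
  have hd₁ := dist_iso_mid (dist_shift hd n) e.symm
  exact ⟨B⟦n⟧, C⟦n⟧, _, _, _, shift_mem_shiftSet hB n, shift_mem_shiftSet hC n, hd₁⟩

lemma factor_vanish_left {T : Triangle D} (hT : T ∈ distTriang D) {V : D} (f : V ⟶ T.obj₁)
    (hf : f ≫ T.mor₁ = 0) (hv : ∀ g : V ⟶ T.obj₃⟦(-1:ℤ)⟧, g = 0) : f = 0 := by
  obtain ⟨g, hg⟩ := Triangle.coyoneda_exact₂ _ (inv_rot_of_distTriang _ hT) f hf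
  rw [hg, hv g]; exact zero_comp

lemma factor_vanish_out₃ {T : Triangle D} (hT : T ∈ distTriang D) {V : D} (f : T.obj₃ ⟶ V)
    (hf : T.mor₂ ≫ f = 0) (hv : ∀ g : T.obj₁⟦(1:ℤ)⟧ ⟶ V, g = 0) : f = 0 := by
  obtain ⟨g, hg⟩ := Triangle.yoneda_exact₃ _ hT f hf
  rw [hg, hv g, comp_zero]

lemma yoneda_exact₁' {T : Triangle D} (hT : T ∈ distTriang D) {V : D} (f : T.obj₁ ⟶ V)
    (hf : T.mor₃⟦(-1:ℤ)⟧' ≫ ((shiftEquiv D (1:ℤ)).unitIso.inv.app T.obj₁) ≫ f = 0) :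
    ∃ g : T.obj₂ ⟶ V, f = T.mor₁ ≫ g := by
  apply Triangle.yoneda_exact₂ _ (inv_rot_of_distTriang _ hT) f
  dsimp [Triangle.invRotate]
  show (-(T.mor₃⟦(-1:ℤ)⟧' ≫ (shiftEquiv D (1:ℤ)).unitIso.inv.app T.obj₁)) ≫ f = 0
  simp only [Preadditive.neg_comp, assoc, neg_eq_zero]
  exact (assoc _ _ _).trans hf

lemma univSub : IsTriangulatedSub D (Set.univ : Set D) :=
  ⟨fun _ _ _ _ => trivial, fun _ _ => trivial, fun _ _ _ => trivial, fun _ _ _ _ => trivial⟩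

end Aux

end Stmt19

namespace Stmt19

set_option linter.unusedSectionVars false

section Toolkit

variable {D}
variable {S L G : Set D}

lemma tk_memS (hS : IsTriangulatedSub D S) {A : D} {n : ℤ} (h : A ∈ shiftSet D S n) : A ∈ S := by
  obtain ⟨B, hB, ⟨e⟩⟩ := h
  exact hS.iso e.symm (hS.shift n B hB)

lemma tk_of_shiftSet_zero_L (hT : IsTStructureOn D S L G) {A : D}
    (h : A ∈ shiftSet D L 0) (hA : A ∈ S) : A ∈ L := by
  obtain ⟨B, hB, ⟨e⟩⟩ := h
  exact hT.isoL (shiftZeroIso B ≪≫ e.symm) hB hA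

lemma tk_of_shiftSet_zero_G (hT : IsTStructureOn D S L G) {A : D}
    (h : A ∈ shiftSet D G 0) (hA : A ∈ S) : A ∈ G := by
  obtain ⟨B, hB, ⟨e⟩⟩ := h
  exact hT.isoG (shiftZeroIso B ≪≫ e.symm) hB hA

lemma tk_shift_L_one (hS : IsTriangulatedSub D S) (hT : IsTStructureOn D S L G)
    {A : D} (hA : A ∈ L) : A⟦(1:ℤ)⟧ ∈ L := by
  obtain ⟨B, hB, ⟨e⟩⟩ := hT.shiftL hA
  have e₂ : B ≅ A⟦(1:ℤ)⟧ :=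
    (negShiftShiftIso B 1).trans ((shiftFunctor D (1:ℤ)).mapIso e.symm)
  exact hT.isoL e₂ hB (hS.shift 1 A (hT.subL hA))

lemma tk_shift_L_nat (hS : IsTriangulatedSub D S) (hT : IsTStructureOn D S L G)
    (k : ℕ) {A : D} (hA : A ∈ L) : A⟦(k:ℤ)⟧ ∈ L := by
  induction k with
  | zero => exact hT.isoL (shiftZeroIso A) hA (hS.shift 0 A (hT.subL hA))
  | succ k ih =>
      have h1 : A⟦(k:ℤ)⟧⟦(1:ℤ)⟧ ∈ L := tk_shift_L_one hS hT ih
      have e : A⟦(k:ℤ)⟧⟦(1:ℤ)⟧ ≅ A⟦((k+1:ℕ):ℤ)⟧ := shiftShiftIso A k 1 _ (by push_cast; ring)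
      exact hT.isoL e h1 (hS.shift _ A (hT.subL hA))

lemma tk_shift_G_neg (hS : IsTriangulatedSub D S) (hT : IsTStructureOn D S L G)
    (k : ℕ) {A : D} (hA : A ∈ G) : A⟦-(k:ℤ)⟧ ∈ G := by
  induction k with
  | zero =>
      have : A⟦-((0:ℕ):ℤ)⟧ = A⟦(0:ℤ)⟧ := by norm_num
      rw [this]
      exact hT.isoG (shiftZeroIso A) hA (hS.shift 0 A (hT.subG hA))
  | succ k ih =>
      have h1 : A⟦-(k:ℤ)⟧⟦(-1:ℤ)⟧ ∈ G := hT.shiftG (shift_mem_shiftSet ih (-1))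
      have e : A⟦-(k:ℤ)⟧⟦(-1:ℤ)⟧ ≅ A⟦-((k+1:ℕ):ℤ)⟧ :=
        shiftShiftIso A (-(k:ℤ)) (-1) _ (by push_cast; ring)
      exact hT.isoG e h1 (hS.shift _ A (hT.subG hA))

lemma tk_L_mono (hS : IsTriangulatedSub D S) (hT : IsTStructureOn D S L G)
    {a b : ℤ} (hba : b ≤ a) : shiftSet D L a ⊆ shiftSet D L b := by
  rintro A ⟨B, hB, ⟨e⟩⟩
  obtain ⟨k, hk⟩ := Int.le.dest hba
  refine mem_shiftSet (tk_shift_L_nat hS hT k hB) (e.trans ?_)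
  exact (shiftShiftIso B k b a (by omega)).symm

lemma tk_G_mono (hS : IsTriangulatedSub D S) (hT : IsTStructureOn D S L G)
    {a b : ℤ} (hab : a ≤ b) : shiftSet D G a ⊆ shiftSet D G b := by
  rintro A ⟨B, hB, ⟨e⟩⟩
  obtain ⟨k, hk⟩ := Int.le.dest hab
  refine mem_shiftSet (tk_shift_G_neg hS hT k hB) (e.trans ?_)
  exact (shiftShiftIso B (-(k:ℤ)) b a (by omega)).symm

lemma tk_vanish (hS : IsTriangulatedSub D S) (hT : IsTStructureOn D S L G)
    {a b : ℤ} (hab : b + 1 ≤ a) {A B : D}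
    (hA : A ∈ shiftSet D L a) (hB : B ∈ shiftSet D G b) (f : A ⟶ B) : f = 0 := by
  obtain ⟨A₀, hA₀, ⟨eA⟩⟩ := hA
  have hB' : B ∈ shiftSet D G (a - 1) := tk_G_mono hS hT (by omega) hB
  obtain ⟨B₀, hB₀, ⟨eB⟩⟩ := hB'
  have eB₂ : B ≅ (B₀⟦(-1:ℤ)⟧)⟦a⟧ := eB.trans (shiftShiftIso B₀ (-1) a (a-1) (by ring)).symm
  have hB₁ : B₀⟦(-1:ℤ)⟧ ∈ shiftSet D G (-1) := shift_mem_shiftSet hB₀ (-1)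
  exact hom_zero_of_isos eA eB₂ (hom_zero_shift a (hT.hom_zero A₀ hA₀ _ hB₁)) f

lemma tk_trunc (hS : IsTriangulatedSub D S) (hT : IsTStructureOn D S L G)
    (n : ℤ) {A : D} (hA : A ∈ S) :
    ∃ (P Q : D) (f : P ⟶ A) (g : A ⟶ Q) (h : Q ⟶ P⟦(1:ℤ)⟧),
      P ∈ S ∧ P ∈ shiftSet D L n ∧ Q ∈ S ∧ Q ∈ shiftSet D G (n - 1) ∧
      Triangle.mk f g h ∈ distTriang D := by
  obtain ⟨B, C, f₀, g₀, h₀, hB, hC, hd⟩ := hT.cover (A⟦-n⟧) (hS.shift (-n) A hA)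
  have hd₁ := dist_shift hd n
  have e : (A⟦-n⟧)⟦n⟧ ≅ A := (negShiftShiftIso A n).symm
  have hd₂ := dist_iso_mid hd₁ e
  have hCS : C ∈ S := tk_memS hS (shiftSet_mono hT.subG (-1) hC)
  refine ⟨B⟦n⟧, C⟦n⟧, _, _, _, hS.shift n B (hT.subL hB), shift_mem_shiftSet hB n,
    hS.shift n C hCS, shiftSet_shift hC n (n-1) (by ring), hd₂⟩

lemma tk_perp_coaisle (hS : IsTriangulatedSub D S) (hT : IsTStructureOn D S L G)
    (n : ℤ) {A : D} (hA : A ∈ S)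
    (v : ∀ B, B ∈ S → B ∈ shiftSet D L n → ∀ f : B ⟶ A, f = 0) :
    A ∈ shiftSet D G (n - 1) := by
  obtain ⟨P, Q, f, g, h, hPS, hPL, hQS, hQG, hd⟩ := tk_trunc hS hT n hA
  have hmor₁ : f = 0 := v P hPS hPL f
  have hid : 𝟙 P = 0 := by
    refine factor_vanish_left hd (𝟙 P) ((id_comp f).trans hmor₁) (fun ψ => ?_)
    exact tk_vanish hS hT (show (n-2)+1 ≤ n by omega) hPL
      (shiftSet_shift hQG (-1) (n-2) (by ring)) ψ
  have hz : IsZero P := by rwa [IsZero.iff_id_eq_zero]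
  have : IsIso g := (Triangle.isZero₁_iff_isIso₂ _ hd).1 hz
  exact shiftSet_iso (asIso g).symm hQG

lemma tk_perp_aisle (hS : IsTriangulatedSub D S) (hT : IsTStructureOn D S L G)
    (n : ℤ) {A : D} (hA : A ∈ S)
    (v : ∀ B, B ∈ S → B ∈ shiftSet D G (n-1) → ∀ f : A ⟶ B, f = 0) :
    A ∈ shiftSet D L n := by
  obtain ⟨P, Q, f, g, h, hPS, hPL, hQS, hQG, hd⟩ := tk_trunc hS hT n hA
  have hmor₂ : g = 0 := v Q hQS hQG g
  obtain ⟨χ, hχ⟩ := Triangle.yoneda_exact₂ _ (rot_of_distTriang _ hd) (𝟙 Q)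
    (by show g ≫ 𝟙 Q = 0; rw [hmor₂, zero_comp])
  have hχ0 : χ = 0 :=
    tk_vanish hS hT (show (n-1)+1 ≤ n+1 by omega)
      (shiftSet_shift hPL 1 (n+1) (by ring)) hQG χ
  have hid : 𝟙 Q = 0 := by rw [hχ, hχ0]; exact comp_zero
  have hz : IsZero Q := by rwa [IsZero.iff_id_eq_zero]
  have : IsIso f := (Triangle.isZero₃_iff_isIso₁ _ hd).1 hz
  exact shiftSet_iso (asIso f) hPL

lemma tk_ext_aisle (hS : IsTriangulatedSub D S) (hT : IsTStructureOn D S L G)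
    (n : ℤ) {T : Triangle D} (hd : T ∈ distTriang D)
    (h₁ : T.obj₁ ∈ shiftSet D L n) (h₃ : T.obj₃ ∈ shiftSet D L n) (h₂ : T.obj₂ ∈ S) :
    T.obj₂ ∈ shiftSet D L n := by
  refine tk_perp_aisle hS hT n h₂ (fun B hBS hBG φ => ?_)
  have h1 : T.mor₁ ≫ φ = 0 := tk_vanish hS hT (by omega) h₁ hBG _
  obtain ⟨ψ, hψ⟩ := Triangle.yoneda_exact₂ _ hd φ h1
  rw [hψ, tk_vanish hS hT (by omega) h₃ hBG ψ, comp_zero]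

lemma tk_ext_coaisle (hS : IsTriangulatedSub D S) (hT : IsTStructureOn D S L G)
    (n : ℤ) {T : Triangle D} (hd : T ∈ distTriang D)
    (h₁ : T.obj₁ ∈ shiftSet D G n) (h₃ : T.obj₃ ∈ shiftSet D G n) (h₂ : T.obj₂ ∈ S) :
    T.obj₂ ∈ shiftSet D G n := by
  have key := tk_perp_coaisle hS hT (n+1) h₂ (fun B hBS hBL φ => ?_)
  · rwa [show n + 1 - 1 = n by ring] at key
  · have h1 : φ ≫ T.mor₂ = 0 := tk_vanish hS hT (by omega) hBL h₃ _
    obtain ⟨ψ, hψ⟩ := Triangle.coyoneda_exact₂ _ hd φ h1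
    rw [hψ, tk_vanish hS hT (by omega) hBL h₁ ψ, zero_comp]

lemma tk_zero_L (hS : IsTriangulatedSub D S) (hT : IsTStructureOn D S L G)
    (n : ℤ) {Z : D} (hZ : IsZero Z) : Z ∈ shiftSet D L n :=
  tk_perp_aisle hS hT n (hS.zero Z hZ) (fun B _ _ f => hZ.eq_of_src f 0)

lemma tk_zero_G (hS : IsTriangulatedSub D S) (hT : IsTStructureOn D S L G)
    (n : ℤ) {Z : D} (hZ : IsZero Z) : Z ∈ shiftSet D G n := by
  have := tk_perp_coaisle hS hT (n+1) (hS.zero Z hZ) (fun B _ _ f => hZ.eq_of_tgt f 0)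
  rwa [show n + 1 - 1 = n by ring] at this

lemma tk_zero_L₀ (hS : IsTriangulatedSub D S) (hT : IsTStructureOn D S L G)
    {Z : D} (hZ : IsZero Z) : Z ∈ L :=
  tk_of_shiftSet_zero_L hT (tk_zero_L hS hT 0 hZ) (hS.zero Z hZ)

lemma tk_zero_G₀ (hS : IsTriangulatedSub D S) (hT : IsTStructureOn D S L G)
    {Z : D} (hZ : IsZero Z) : Z ∈ G :=
  hT.shiftG (tk_zero_G hS hT (-1) hZ)

end Toolkit

end Stmt19

namespace Stmt19

set_option linter.unusedSectionVars false
set_option maxHeartbeats 1000000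

section Mid

variable {D}
variable {S L G : Set D}

/-- every `𝒰`-bounded object lies in any triangulated subcategory containing the heart -/
lemma window_mem (hS : IsTriangulatedSub D S) (hHS : L ∩ G ⊆ S) (hU : IsTStructure D L G) :
    ∀ (k : ℕ) (a : ℤ) (A : D), A ∈ shiftSet D L a → A ∈ shiftSet D G (a + k) → A ∈ S := by
  have hUt : IsTStructureOn D Set.univ L G := hU
  have heart : ∀ (a : ℤ) (A : D), A ∈ shiftSet D L a → A ∈ shiftSet D G a → A ∈ S := by
    intro a A hL hG
    obtain ⟨B, hB, ⟨e⟩⟩ := hL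
    obtain ⟨C, hC, ⟨e'⟩⟩ := hG
    have h₁ : A⟦-a⟧ ∈ L := hUt.isoL
      ((shiftNegShiftIso B a).trans ((shiftFunctor D (-a)).mapIso e.symm)) hB trivial
    have h₂ : A⟦-a⟧ ∈ G := hUt.isoG
      ((shiftNegShiftIso C a).trans ((shiftFunctor D (-a)).mapIso e'.symm)) hC trivial
    have h₃ : A⟦-a⟧ ∈ S := hHS ⟨h₁, h₂⟩
    exact hS.iso (negShiftShiftIso A a).symm (hS.shift a _ h₃)
  intro k
  induction k with
  | zero =>
      intro a A hL hG
      simp only [Nat.cast_zero, add_zero] at hG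
      exact heart a A hL hG
  | succ k ih =>
      intro a A hL hG
      have hG' : A ∈ shiftSet D G ((a + 1) + (k:ℤ)) := by
        convert hG using 2; push_cast; ring
      obtain ⟨P, Q, f, g, h, _, hPL, _, hQG, hd⟩ := tk_trunc univSub hUt (a+1) (Set.mem_univ A)
      have hQG' : Q ∈ shiftSet D G a := by rwa [show a + 1 - 1 = a by ring] at hQG
      have hQL : Q ∈ shiftSet D L a := by
        have := tk_ext_aisle univSub hUt a (rot_of_distTriang _ hd)
          (show A ∈ shiftSet D L a from hL)
          (show P⟦(1:ℤ)⟧ ∈ shiftSet D L a from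
            tk_L_mono univSub hUt (by omega) (shiftSet_shift hPL 1 (a+2) (by ring)))
          trivial
        exact this
      have hQS : Q ∈ S := heart a Q hQL hQG'
      have hPG : P ∈ shiftSet D G ((a+1) + (k:ℤ)) := by
        have := tk_ext_coaisle univSub hUt ((a+1)+(k:ℤ)) (inv_rot_of_distTriang _ hd)
          (show Q⟦(-1:ℤ)⟧ ∈ shiftSet D G ((a+1)+(k:ℤ)) from
            tk_G_mono univSub hUt (by omega) (shiftSet_shift hQG' (-1) (a-1) (by ring)))
          (show A ∈ shiftSet D G ((a+1)+(k:ℤ)) from hG') trivial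
        exact this
      have hPS : P ∈ S := ih (a+1) P hPL hPG
      exact hS.ext₂ _ hd hPS hQS

/-- `Hom` vanishing into a cone of a composite, given vanishing into the two cones -/
lemma cone_comp_vanish {X Y A Z₁ Z₂ W T : D}
    {f : X ⟶ Y} {q₁ : Y ⟶ Z₁} {d₁ : Z₁ ⟶ X⟦(1:ℤ)⟧} (h₁ : Triangle.mk f q₁ d₁ ∈ distTriang D)
    {g : Y ⟶ A} {q₂ : A ⟶ Z₂} {d₂ : Z₂ ⟶ Y⟦(1:ℤ)⟧} (h₂ : Triangle.mk g q₂ d₂ ∈ distTriang D)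
    {q₃ : A ⟶ W} {d₃ : W ⟶ X⟦(1:ℤ)⟧} (h₃ : Triangle.mk (f ≫ g) q₃ d₃ ∈ distTriang D)
    (v₁ : ∀ φ : T ⟶ Z₁, φ = 0) (v₂ : ∀ φ : T ⟶ Z₂, φ = 0) (φ : T ⟶ W) : φ = 0 := by
  have h31' : d₃ ≫ (f ≫ g)⟦(1:ℤ)⟧' = 0 := comp_distTriang_mor_zero₃₁ _ h₃
  have h12' : (f ≫ g) ≫ q₃ = 0 := comp_distTriang_mor_zero₁₂ _ h₃
  have hu : (φ ≫ d₃ ≫ f⟦(1:ℤ)⟧') ≫ g⟦(1:ℤ)⟧' = 0 := by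
    simp only [assoc]
    rw [← Functor.map_comp, h31', comp_zero]
  obtain ⟨v, hv⟩ := Triangle.coyoneda_exact₁ _ h₂ (φ ≫ d₃ ≫ f⟦(1:ℤ)⟧') hu
  have hu0 : (φ ≫ d₃) ≫ f⟦(1:ℤ)⟧' = 0 := by
    have : φ ≫ d₃ ≫ f⟦(1:ℤ)⟧' = 0 := hv.trans (by rw [v₂ v]; exact zero_comp)
    simpa only [assoc] using this
  obtain ⟨w, hw⟩ := Triangle.coyoneda_exact₁ _ h₁ (φ ≫ d₃) hu0
  have hd30 : φ ≫ d₃ = 0 := hw.trans (by rw [v₁ w]; exact zero_comp)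
  obtain ⟨k0, hk0⟩ := Triangle.coyoneda_exact₃ _ h₃ φ hd30
  obtain ⟨k1, hk1⟩ := Triangle.coyoneda_exact₂ _ h₂ k0 (v₂ (k0 ≫ q₂))
  obtain ⟨k2, hk2⟩ := Triangle.coyoneda_exact₂ _ h₁ k1 (v₁ (k1 ≫ q₁))
  rw [hk0, hk1, hk2]
  show ((k2 ≫ f) ≫ g) ≫ q₃ = 0
  simp only [assoc]
  have e : ∀ k : T ⟶ X, (k ≫ f) ≫ g ≫ q₃ = 0 := fun k => by rw [assoc, ← assoc f g q₃, h12', comp_zero]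
  exact e k2

/-- `Hom` vanishing out of a fibre of a composite, given vanishing out of the two fibres -/
lemma fib_comp_vanish {P B Q Q' Q'' E V : D}
    {a : P ⟶ B} {b : B ⟶ Q} {c : Q ⟶ P⟦(1:ℤ)⟧} (h₁ : Triangle.mk a b c ∈ distTriang D)
    {a' : Q' ⟶ Q} {b' : Q ⟶ Q''} {c' : Q'' ⟶ Q'⟦(1:ℤ)⟧} (h₂ : Triangle.mk a' b' c' ∈ distTriang D)
    {ε : E ⟶ B} {δ : Q'' ⟶ E⟦(1:ℤ)⟧} (h₃ : Triangle.mk ε (b ≫ b') δ ∈ distTriang D)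
    (vP : ∀ φ : P ⟶ V, φ = 0) (vQ' : ∀ φ : Q' ⟶ V, φ = 0) (h : E ⟶ V) : h = 0 := by
  have h23' : (b ≫ b') ≫ δ = 0 := comp_distTriang_mor_zero₂₃ _ h₃
  have h12' : ε ≫ (b ≫ b') = 0 := comp_distTriang_mor_zero₁₂ _ h₃
  set ι : E⟦(1:ℤ)⟧⟦(-1:ℤ)⟧ ⟶ E := (shiftEquiv D (1:ℤ)).unitIso.inv.app E with hι
  set κ : E⟦(1:ℤ)⟧⟦(-1:ℤ)⟧ ⟶ V := ι ≫ h with hκ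
  have S₁ := dist_shift h₁ (-1)
  have S₂ := dist_shift h₂ (-1)
  have hbbd : b⟦(-1:ℤ)⟧' ≫ b'⟦(-1:ℤ)⟧' ≫ δ⟦(-1:ℤ)⟧' ≫ κ = 0 := by
    rw [← Functor.map_comp_assoc, ← Functor.map_comp_assoc, h23', Functor.map_zero, zero_comp]
  have hw : b'⟦(-1:ℤ)⟧' ≫ δ⟦(-1:ℤ)⟧' ≫ κ = 0 := by
    refine factor_vanish_out₃ S₁ (b'⟦(-1:ℤ)⟧' ≫ δ⟦(-1:ℤ)⟧' ≫ κ) ?_ (fun ψ =>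
      vanish_of_iso (negShiftShiftIso P 1) vP ψ)
    show ((-1 : ℤ).negOnePow • b⟦(-1:ℤ)⟧') ≫ (b'⟦(-1:ℤ)⟧' ≫ δ⟦(-1:ℤ)⟧' ≫ κ) = 0
    rw [Linear.units_smul_comp, hbbd, smul_zero]
  have hψ₀ : δ⟦(-1:ℤ)⟧' ≫ κ = 0 := by
    refine factor_vanish_out₃ S₂ (δ⟦(-1:ℤ)⟧' ≫ κ) ?_ (fun ψ =>
      vanish_of_iso (negShiftShiftIso Q' 1) vQ' ψ)
    show ((-1 : ℤ).negOnePow • b'⟦(-1:ℤ)⟧') ≫ (δ⟦(-1:ℤ)⟧' ≫ κ) = 0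
    rw [Linear.units_smul_comp, hw, smul_zero]
  obtain ⟨h₁', hh₁'⟩ := yoneda_exact₁' h₃ h (by
    show δ⟦(-1:ℤ)⟧' ≫ ι ≫ h = 0
    rw [← hκ]; exact hψ₀)
  obtain ⟨h₂', hh₂'⟩ := Triangle.yoneda_exact₂ _ h₁ h₁' (vP (a ≫ h₁'))
  obtain ⟨h₃', hh₃'⟩ := Triangle.yoneda_exact₂ _ h₂ h₂' (vQ' (a' ≫ h₂'))
  rw [hh₁', hh₂', hh₃']
  show ε ≫ b ≫ b' ≫ h₃' = 0
  rw [← assoc b b' h₃', ← assoc ε (b ≫ b') h₃', h12']; exact zero_comp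

end Mid

end Stmt19

namespace Stmt19

set_option linter.unusedSectionVars false
set_option maxHeartbeats 1600000

section Main

variable {D}
variable {L G S : Set D} {m : ℤ}

lemma homZero_starR {Z X Y : Set D} (h₁ : homZero D Z X) (h₂ : homZero D Z Y) :
    homZero D Z (starSet D X Y) := by
  intro A hA B hB f
  obtain ⟨P, Q, u, v, w, hP, hQ, hd⟩ := hB
  obtain ⟨ψ, hψ⟩ := Triangle.coyoneda_exact₂ _ hd f (h₂ A hA Q hQ (f ≫ v))
  rw [hψ, h₁ A hA P hP ψ]; exact zero_comp

lemma homZero_starL {X Y Z : Set D} (h₁ : homZero D X Z) (h₂ : homZero D Y Z) :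
    homZero D (starSet D X Y) Z := by
  intro A hA B hB f
  obtain ⟨P, Q, u, v, w, hP, hQ, hd⟩ := hA
  obtain ⟨ψ, hψ⟩ := Triangle.yoneda_exact₂ _ hd f (h₁ P hP B hB (u ≫ f))
  rw [hψ, h₂ Q hQ B hB ψ]; exact comp_zero

lemma shiftSet_inter (hS : IsTriangulatedSub D S) {T : Set D} {A : D} {n : ℤ}
    (h : A ∈ shiftSet D T n) (hA : A ∈ S) : A ∈ shiftSet D (S ∩ T) n := by
  obtain ⟨B, hB, ⟨e⟩⟩ := h
  have e₂ : B ≅ A⟦-n⟧ := (shiftNegShiftIso B n).trans ((shiftFunctor D (-n)).mapIso e.symm)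
  exact ⟨B, ⟨hS.iso e₂.symm (hS.shift (-n) A hA), hB⟩, ⟨e⟩⟩

lemma lambda_block (hU : IsTStructure D L G) (hm : 1 ≤ m) (hS : IsTriangulatedSub D S)
    (hHS : L ∩ G ⊆ S) (hUS : IsTStructureOn D S (S ∩ L) (S ∩ G))
    {X₁ X₂ : Set D} (hX : IsTStructure D X₁ X₂) (hLm : shiftSet D L m ⊆ X₁)
    (hXL : X₁ ⊆ L) :
    IsTStructureOn D S (S ∩ X₁) (S ∩ X₂) ∧
    starSet D (shiftSet D L m) (S ∩ X₁) = X₁ ∧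
    starSet D (S ∩ X₂) G = X₂ := by
  have hUt : IsTStructureOn D Set.univ L G := hU
  have hXt : IsTStructureOn D Set.univ X₁ X₂ := hX
  have hX2G : shiftSet D X₂ (-1) ⊆ shiftSet D G (m-1) := fun A hA =>
    tk_perp_coaisle univSub hUt m trivial
      (fun B _ hB f => hXt.hom_zero B (hLm hB) A hA f)
  -- the λ-cover : every object of `S` has an `X`-truncation triangle inside `S`
  have lcover : ∀ A, A ∈ S → ∃ (A' A'' : D) (α : A' ⟶ A) (β : A ⟶ A'') (dA : A'' ⟶ A'⟦(1:ℤ)⟧),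
      A' ∈ S ∧ A' ∈ X₁ ∧ A'' ∈ S ∧ A'' ∈ shiftSet D X₂ (-1) ∧
      Triangle.mk α β dA ∈ distTriang D := by
    intro A hA
    obtain ⟨B, C, i, p, dC, hB, hC, hdBC⟩ := hUS.cover A hA
    have hCG : C ∈ shiftSet D G (-1) := shiftSet_mono Set.inter_subset_right (-1) hC
    obtain ⟨B', B'', j, q, dB, hB', hB'', hdB⟩ := hXt.cover B trivial
    have hB''G : B'' ∈ shiftSet D G (m-1) := hX2G hB''
    have hB''L : B'' ∈ shiftSet D L 0 := by
      have := tk_ext_aisle univSub hUt 0 (rot_of_distTriang _ hdB)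
        (show B ∈ shiftSet D L 0 from mem_shiftSet_zero hB.2)
        (show B'⟦(1:ℤ)⟧ ∈ shiftSet D L 0 from
          tk_L_mono univSub hUt (by omega) (shift_mem_shiftSet (hXL hB') 1)) trivial
      exact this
    have hB''S : B'' ∈ S := window_mem hS hHS hU (m-1).toNat 0 B'' hB''L
      (by rw [show ((0:ℤ) + (((m-1).toNat):ℤ)) = m - 1 by omega]; exact hB''G)
    have hB'S : B' ∈ S := hS.ext₂ _ (inv_rot_of_distTriang _ hdB)
      (hS.shift (-1) B'' hB''S) hB.1
    obtain ⟨A', A'', α, β, dA, hA', hA'', hdA⟩ := hXt.cover A trivial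
    obtain ⟨φ₁, hφ₁⟩ : ∃ φ : B' ⟶ A', j ≫ i = φ ≫ α := Triangle.coyoneda_exact₂ _ hdA (j ≫ i)
      (hXt.hom_zero B' hB' A'' hA'' ((j ≫ i) ≫ β))
    obtain ⟨γ, hγ⟩ : ∃ φ : A' ⟶ B, α = φ ≫ i := Triangle.coyoneda_exact₂ _ hdBC α
      (tk_vanish univSub hUt (by omega) (mem_shiftSet_zero (hXL hA')) hCG (α ≫ p))
    obtain ⟨φ₂, hφ₂⟩ : ∃ φ : A' ⟶ B', γ = φ ≫ j := Triangle.coyoneda_exact₂ _ hdB γ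
      (hXt.hom_zero A' hA' B'' hB'' (γ ≫ q))
    have h21 : φ₂ ≫ φ₁ = 𝟙 A' := by
      have e1 : (φ₂ ≫ φ₁) ≫ α = α := by
        rw [assoc, ← hφ₁, ← assoc, ← hφ₂, ← hγ]
      have e0 : (φ₂ ≫ φ₁ - 𝟙 A') ≫ α = 0 := by
        rw [Preadditive.sub_comp, e1, id_comp, sub_self]
      have := factor_vanish_left hdA (φ₂ ≫ φ₁ - 𝟙 A') e0 (fun g =>
        tk_vanish univSub hXt (show (-2:ℤ)+1 ≤ 0 by omega) (mem_shiftSet_zero hA')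
          (shiftSet_shift hA'' (-1) (-2) (by ring)) g)
      exact sub_eq_zero.mp this
    have h12 : φ₁ ≫ φ₂ = 𝟙 B' := by
      have e2a : ((φ₁ ≫ φ₂) ≫ j) ≫ i = j ≫ i := by
        rw [assoc φ₁ φ₂ j, ← hφ₂, assoc, ← hγ, ← hφ₁]
      have e2 : ((φ₁ ≫ φ₂) ≫ j - j) ≫ i = 0 := by
        rw [Preadditive.sub_comp, e2a, sub_self]
      have e3 := factor_vanish_left hdBC ((φ₁ ≫ φ₂) ≫ j - j) e2 (fun g =>
        tk_vanish univSub hUt (show (-2:ℤ)+1 ≤ 0 by omega) (mem_shiftSet_zero (hXL hB'))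
          (shiftSet_shift hCG (-1) (-2) (by ring)) g)
      have e4 : (φ₁ ≫ φ₂) ≫ j = j := by exact sub_eq_zero.mp e3
      have e5 : (φ₁ ≫ φ₂ - 𝟙 B') ≫ j = 0 := by
        rw [Preadditive.sub_comp, e4, id_comp, sub_self]
      have e6 := factor_vanish_left hdB (φ₁ ≫ φ₂ - 𝟙 B') e5 (fun g =>
        tk_vanish univSub hXt (show (-2:ℤ)+1 ≤ 0 by omega) (mem_shiftSet_zero hB')
          (shiftSet_shift hB'' (-1) (-2) (by ring)) g)
      exact sub_eq_zero.mp e6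
    have eIso : B' ≅ A' := ⟨φ₁, φ₂, h12, h21⟩
    have hA'S : A' ∈ S := hS.iso eIso hB'S
    have hA''S : A'' ∈ S := hS.ext₂ _ (rot_of_distTriang _ hdA) hA (hS.shift 1 A' hA'S)
    exact ⟨A', A'', α, β, dA, hA'S, hA', hA''S, hA'', hdA⟩
  refine ⟨⟨Set.inter_subset_left, Set.inter_subset_left, ?_, ?_, ?_, ?_, ?_, ?_⟩, ?_, ?_⟩
  · intro A B e hA hB
    exact ⟨hB, hXt.isoL e hA.2 trivial⟩
  · intro A B e hA hB
    exact ⟨hB, hXt.isoG e hA.2 trivial⟩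
  · intro A hA B hB f
    exact hXt.hom_zero A hA.2 B (shiftSet_mono Set.inter_subset_right (-1) hB) f
  · intro A hA
    obtain ⟨A', A'', α, β, dA, h1, h2, h3, h4, hd⟩ := lcover A hA
    exact ⟨A', A'', α, β, dA, ⟨h1, h2⟩, shiftSet_inter hS h4 h3, hd⟩
  · intro A hA
    exact mem_shiftSet (⟨hS.shift 1 A hA.1, tk_shift_L_one univSub hXt hA.2⟩ :
      A⟦(1:ℤ)⟧ ∈ S ∩ X₁) (shiftNegShiftIso A 1)
  · intro A hA
    have hAS : A ∈ S := tk_memS hS (shiftSet_mono Set.inter_subset_left (-1) hA)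
    exact ⟨hAS, hXt.shiftG (shiftSet_mono Set.inter_subset_right (-1) hA)⟩
  · ext A
    constructor
    · rintro ⟨P, R, f, g, h, hP, hR, hd⟩
      refine tk_of_shiftSet_zero_L hXt ?_ trivial
      refine tk_perp_aisle univSub hXt 0 trivial (fun V _ hV φ => ?_)
      have hV' : V ∈ shiftSet D X₂ (-1) := by
        rwa [show (0:ℤ)-1 = -1 by ring] at hV
      obtain ⟨ψ, hψ⟩ := Triangle.yoneda_exact₂ _ hd φ (hXt.hom_zero P (hLm hP) V hV' (f ≫ φ))
      rw [hψ, hXt.hom_zero R hR.2 V hV' ψ]; exact comp_zero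
    · intro hA
      obtain ⟨P, Q, f, g, h, _, hPL, _, hQG, hd⟩ := tk_trunc univSub hUt m (A := A) trivial
      have hQL : Q ∈ shiftSet D L 0 := by
        have := tk_ext_aisle univSub hUt 0 (rot_of_distTriang _ hd)
          (show A ∈ shiftSet D L 0 from mem_shiftSet_zero (hXL hA))
          (show P⟦(1:ℤ)⟧ ∈ shiftSet D L 0 from
            tk_L_mono univSub hUt (by omega) (shiftSet_shift hPL 1 (m+1) (by ring))) trivial
        exact this
      have hQS : Q ∈ S := window_mem hS hHS hU (m-1).toNat 0 Q hQL
        (by rw [show ((0:ℤ) + (((m-1).toNat):ℤ)) = m - 1 by omega]; exact hQG)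
      have hQX : Q ∈ X₁ := by
        refine tk_of_shiftSet_zero_L hXt ?_ trivial
        refine tk_perp_aisle univSub hXt 0 trivial (fun V _ hV φ => ?_)
        have hV' : V ∈ shiftSet D X₂ (-1) := by
          rwa [show (0:ℤ)-1 = -1 by ring] at hV
        obtain ⟨ψ, hψ⟩ := Triangle.yoneda_exact₂ _ (rot_of_distTriang _ hd) φ
          (hXt.hom_zero A hA V hV' (g ≫ φ))
        rw [hψ, tk_vanish univSub hUt (show (m-1)+1 ≤ m+1 by omega)
          (shiftSet_shift hPL 1 (m+1) (by ring)) (hX2G hV') ψ]; exact comp_zero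
      exact ⟨P, Q, f, g, h, hPL, ⟨hQS, hQX⟩, hd⟩
  · ext A
    constructor
    · rintro ⟨V, C, f, g, h, hV, hC, hd⟩
      refine tk_of_shiftSet_zero_G hXt ?_ trivial
      have key := tk_perp_coaisle univSub hXt 1 (A := A) trivial (fun B₁ _ hB₁ φ => ?_)
      · rwa [show (1:ℤ)-1 = 0 by ring] at key
      · have hB₁L : B₁ ∈ shiftSet D L 1 := shiftSet_mono hXL 1 hB₁
        obtain ⟨ψ, hψ⟩ := Triangle.coyoneda_exact₂ _ hd φ
          (tk_vanish univSub hUt (by omega) hB₁L (mem_shiftSet_zero hC) (φ ≫ g))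
        rw [hψ, tk_vanish univSub hXt (by omega) hB₁ (mem_shiftSet_zero hV.2) ψ]; exact zero_comp
    · intro hA
      have hL1X : shiftSet D L (m+1) ⊆ shiftSet D X₁ 1 := by
        rintro B₁ ⟨B₀, hB₀, ⟨e⟩⟩
        exact ⟨B₀⟦m⟧, hLm (shift_mem_shiftSet hB₀ m),
          ⟨e.trans (shiftShiftIso B₀ m 1 (m+1) rfl).symm⟩⟩
      have hAG : A ∈ shiftSet D G m := by
        have key := tk_perp_coaisle univSub hUt (m+1) trivial (fun B₁ _ hB₁ φ =>
          tk_vanish univSub hXt (by omega) (hL1X hB₁) (mem_shiftSet_zero hA) φ)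
        rwa [show m+1-1 = m by ring] at key
      obtain ⟨B, C, f, g, h, _, hBL, _, hCG, hd⟩ := tk_trunc univSub hUt 0 (A := A) trivial
      have hCG1 : C ∈ shiftSet D G (-1) := by rwa [show (0:ℤ)-1 = -1 by ring] at hCG
      have hBGm : B ∈ shiftSet D G m := by
        have := tk_ext_coaisle univSub hUt m (inv_rot_of_distTriang _ hd)
          (show C⟦(-1:ℤ)⟧ ∈ shiftSet D G m from
            tk_G_mono univSub hUt (by omega) (shiftSet_shift hCG1 (-1) (-2) (by ring)))
          (show A ∈ shiftSet D G m from hAG) trivial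
        exact this
      have hBS : B ∈ S := window_mem hS hHS hU m.toNat 0 B hBL
        (by rw [show ((0:ℤ) + ((m.toNat):ℤ)) = m by omega]; exact hBGm)
      have hBX₂ : B ∈ X₂ := by
        refine tk_of_shiftSet_zero_G hXt ?_ trivial
        have key := tk_perp_coaisle univSub hXt 1 (A := B) trivial (fun B₁ _ hB₁ φ => ?_)
        · rwa [show (1:ℤ)-1 = 0 by ring] at key
        · obtain ⟨ψ, hψ⟩ := Triangle.coyoneda_exact₂ _ (inv_rot_of_distTriang _ hd) φ
            (tk_vanish univSub hXt (by omega) hB₁ (mem_shiftSet_zero hA) (φ ≫ f))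
          rw [hψ, tk_vanish univSub hUt (show (-2:ℤ)+1 ≤ 1 by omega)
            (shiftSet_mono hXL 1 hB₁) (shiftSet_shift hCG1 (-1) (-2) (by ring)) ψ]; exact zero_comp
      exact ⟨B, C, f, g, h, ⟨hBS, hBX₂⟩, hUt.shiftG hCG1, hd⟩

end Main

end Stmt19

namespace Stmt19

set_option linter.unusedSectionVars false
set_option maxHeartbeats 1600000

section MainMu

open scoped ZeroObject

variable {D}
variable {L G S : Set D} {m : ℤ}

lemma mu_block (hU : IsTStructure D L G) (hm : 1 ≤ m) (hS : IsTriangulatedSub D S)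
    (hHS : L ∩ G ⊆ S) (hUS : IsTStructureOn D S (S ∩ L) (S ∩ G))
    {Y₁ Y₂ : Set D} (hY : IsTStructureOn D S Y₁ Y₂)
    (hmY : S ∩ shiftSet D L m ⊆ Y₁) (hYL : Y₁ ⊆ S ∩ L) :
    IsTStructure D (starSet D (shiftSet D L m) Y₁) (starSet D Y₂ G) ∧
    shiftSet D L m ⊆ starSet D (shiftSet D L m) Y₁ ∧
    starSet D (shiftSet D L m) Y₁ ⊆ L ∧
    S ∩ starSet D (shiftSet D L m) Y₁ = Y₁ ∧
    S ∩ starSet D Y₂ G = Y₂ := by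
  have hUt : IsTStructureOn D Set.univ L G := hU
  -- `Y₂⟦-1⟧ ⊆ U^{≥ 1-m}`
  have hY2G : shiftSet D Y₂ (-1) ⊆ shiftSet D G (m - 1) := by
    intro A hA
    have hAS : A ∈ S := tk_memS hS (shiftSet_mono hY.subG (-1) hA)
    obtain ⟨P, Q, f, g, h, hPS, hPL, hQS, hQG, hd⟩ := tk_trunc hS hUS m hAS
    have hPY : P ∈ Y₁ := hmY ⟨hPS, shiftSet_mono Set.inter_subset_right m hPL⟩
    have hf : f = 0 := hY.hom_zero P hPY A hA f
    have hid : 𝟙 P = 0 := by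
      refine factor_vanish_left hd (𝟙 P) ((id_comp f).trans hf) (fun ψ => ?_)
      exact tk_vanish hS hUS (show (m-2)+1 ≤ m by omega) hPL
        (shiftSet_shift hQG (-1) (m-2) (by ring)) ψ
    have hz : IsZero P := by rwa [IsZero.iff_id_eq_zero]
    have : IsIso g := (Triangle.isZero₁_iff_isIso₂ _ hd).1 hz
    exact shiftSet_iso (asIso g).symm (shiftSet_mono Set.inter_subset_right (m-1) hQG)
  have hY1L0 : ∀ {A}, A ∈ Y₁ → A ∈ shiftSet D L 0 := fun hA => mem_shiftSet_zero (hYL hA).2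
  -- the μ-cover
  have mcover : ∀ A : D, A ∈ starSet D (starSet D (shiftSet D L m) Y₁)
      (shiftSet D (starSet D Y₂ G) (-1)) := by
    intro A
    obtain ⟨B, C, i, p, dC, hBL, hCG, hdBC⟩ := hUt.cover A trivial
    obtain ⟨P, Q, j, q, dQ, _, hPL, _, hQG, hdQ⟩ := tk_trunc univSub hUt m (A := B) trivial
    have hQL : Q ∈ shiftSet D L 0 := by
      have := tk_ext_aisle univSub hUt 0 (rot_of_distTriang _ hdQ)
        (show B ∈ shiftSet D L 0 from mem_shiftSet_zero hBL)
        (show P⟦(1:ℤ)⟧ ∈ shiftSet D L 0 from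
          tk_L_mono univSub hUt (by omega) (shiftSet_shift hPL 1 (m+1) (by ring))) trivial
      exact this
    have hQS : Q ∈ S := window_mem hS hHS hU (m-1).toNat 0 Q hQL
      (by rw [show ((0:ℤ) + (((m-1).toNat):ℤ)) = m - 1 by omega]; exact hQG)
    obtain ⟨Q', Q'', a', b', c', hQ'Y, hQ''Y, hdY⟩ := hY.cover Q hQS
    obtain ⟨E, ε, δ, hdE⟩ := distinguished_cocone_triangle₁ (q ≫ b')
    have hEvan : ∀ (V : D), (V ∈ shiftSet D G (-1) ∨ V ∈ shiftSet D Y₂ (-1)) →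
        ∀ φ : E ⟶ V, φ = 0 := by
      intro V hV φ
      refine fib_comp_vanish hdQ hdY hdE (fun ψ => ?_) (fun ψ => ?_) φ
      · rcases hV with hV | hV
        · exact tk_vanish univSub hUt (by omega) hPL hV ψ
        · exact tk_vanish univSub hUt (show (m-1)+1 ≤ m by omega) hPL (hY2G hV) ψ
      · rcases hV with hV | hV
        · exact tk_vanish univSub hUt (by omega) (hY1L0 hQ'Y) hV ψ
        · exact hY.hom_zero Q' hQ'Y V hV ψ
    have hEL : E ∈ shiftSet D L 0 := tk_perp_aisle univSub hUt 0 trivial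
      (fun V _ hV φ => hEvan V (Or.inl (by rwa [show (0:ℤ)-1 = -1 by ring] at hV)) φ)
    obtain ⟨P₂, E₂, j₂, q₂, d₂, _, hP₂L, _, hE₂G, hdE₂⟩ := tk_trunc univSub hUt m (A := E) trivial
    have hE₂L : E₂ ∈ shiftSet D L 0 := by
      have := tk_ext_aisle univSub hUt 0 (rot_of_distTriang _ hdE₂) hEL
        (show P₂⟦(1:ℤ)⟧ ∈ shiftSet D L 0 from
          tk_L_mono univSub hUt (by omega) (shiftSet_shift hP₂L 1 (m+1) (by ring))) trivial
      exact this
    have hE₂S : E₂ ∈ S := window_mem hS hHS hU (m-1).toNat 0 E₂ hE₂L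
      (by rw [show ((0:ℤ) + (((m-1).toNat):ℤ)) = m - 1 by omega]; exact hE₂G)
    have hE₂Y : E₂ ∈ Y₁ := by
      refine tk_of_shiftSet_zero_L hY ?_ hE₂S
      refine tk_perp_aisle hS hY 0 hE₂S (fun V hVS hV φ => ?_)
      have hV' : V ∈ shiftSet D Y₂ (-1) := by rwa [show (0:ℤ)-1 = -1 by ring] at hV
      obtain ⟨ψ, hψ⟩ := Triangle.yoneda_exact₂ _ (rot_of_distTriang _ hdE₂) φ
        (hEvan V (Or.inr hV') (q₂ ≫ φ))
      rw [hψ, tk_vanish univSub hUt (show (m-1)+1 ≤ m+1 by omega)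
        (shiftSet_shift hP₂L 1 (m+1) (by ring)) (hY2G hV') ψ]; exact comp_zero
    obtain ⟨W, qW, dW, hdW⟩ := distinguished_cocone_triangle (ε ≫ i)
    have hWvan : ∀ (T' : D), (T' ∈ shiftSet D L m ∨ T' ∈ Y₁) → ∀ ψ : T' ⟶ W, ψ = 0 := by
      intro T' hT' ψ
      refine cone_comp_vanish hdE hdBC hdW (fun φ => ?_) (fun φ => ?_) ψ
      · rcases hT' with h | h
        · exact tk_vanish univSub hUt (show (m-1)+1 ≤ m by omega) h (hY2G hQ''Y) φ
        · exact hY.hom_zero T' h Q'' hQ''Y φ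
      · rcases hT' with h | h
        · exact tk_vanish univSub hUt (by omega) h hCG φ
        · exact tk_vanish univSub hUt (by omega) (hY1L0 h) hCG φ
    have hWG : W ∈ shiftSet D G (m-1) := tk_perp_coaisle univSub hUt m trivial
      (fun B' _ hB' ψ => hWvan B' (Or.inl hB') ψ)
    obtain ⟨W₁, W₂, u₁, u₂, u₃, _, hW₁L, _, hW₂G, hdWt⟩ := tk_trunc univSub hUt 0 (A := W) trivial
    have hW₂G' : W₂ ∈ shiftSet D G (-1) := by rwa [show (0:ℤ)-1 = -1 by ring] at hW₂G
    have hW₁G : W₁ ∈ shiftSet D G (m-1) := by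
      have := tk_ext_coaisle univSub hUt (m-1) (inv_rot_of_distTriang _ hdWt)
        (show W₂⟦(-1:ℤ)⟧ ∈ shiftSet D G (m-1) from
          tk_G_mono univSub hUt (by omega) (shiftSet_shift hW₂G' (-1) (-2) (by ring)))
        (show W ∈ shiftSet D G (m-1) from hWG) trivial
      exact this
    have hW₁S : W₁ ∈ S := window_mem hS hHS hU (m-1).toNat 0 W₁ hW₁L
      (by rw [show ((0:ℤ) + (((m-1).toNat):ℤ)) = m - 1 by omega]; exact hW₁G)
    have hW₁Y₂ : W₁ ∈ shiftSet D Y₂ (-1) := by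
      have key := tk_perp_coaisle hS hY 0 (A := W₁) hW₁S (fun B' hB'S hB' ψ => ?_)
      · rwa [show (0:ℤ)-1 = -1 by ring] at key
      · have hB'Y : B' ∈ Y₁ := tk_of_shiftSet_zero_L hY hB' hB'S
        refine factor_vanish_left hdWt ψ (hWvan B' (Or.inr hB'Y) (ψ ≫ u₁)) (fun χ => ?_)
        exact tk_vanish univSub hUt (show (-2:ℤ)+1 ≤ 0 by omega) (hY1L0 hB'Y)
          (shiftSet_shift hW₂G' (-1) (-2) (by ring)) χ
    have hWmem : W ∈ shiftSet D (starSet D Y₂ G) (-1) := by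
      have hW₁1 : W₁⟦(1:ℤ)⟧ ∈ Y₂ := by
        obtain ⟨B₂, hB₂, ⟨e⟩⟩ := hW₁Y₂
        exact hY.isoG ((negShiftShiftIso B₂ 1).trans ((shiftFunctor D (1:ℤ)).mapIso e.symm))
          hB₂ (hS.shift 1 W₁ hW₁S)
      have hW₂1 : W₂⟦(1:ℤ)⟧ ∈ G := by
        obtain ⟨C₂, hC₂, ⟨e⟩⟩ := hW₂G'
        exact hUt.isoG ((negShiftShiftIso C₂ 1).trans ((shiftFunctor D (1:ℤ)).mapIso e.symm))
          hC₂ trivial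
      have hWstar : W⟦(1:ℤ)⟧ ∈ starSet D Y₂ G :=
        ⟨W₁⟦(1:ℤ)⟧, W₂⟦(1:ℤ)⟧, _, _, _, hW₁1, hW₂1, dist_shift hdWt 1⟩
      exact mem_shiftSet hWstar (shiftNegShiftIso W 1)
    exact ⟨E, W, ε ≫ i, qW, dW, ⟨P₂, E₂, j₂, q₂, d₂, hP₂L, hE₂Y, hdE₂⟩, hWmem, hdW⟩
  refine ⟨⟨fun _ _ => trivial, fun _ _ => trivial, ?_, ?_, ?_, ?_, ?_, ?_⟩, ?_, ?_, ?_, ?_⟩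
  · intro A B e hA _
    exact starSet_iso e hA
  · intro A B e hA _
    exact starSet_iso e hA
  · -- hom_zero
    intro A hA B hB f
    have hB' := shiftSet_starSet (-1) hB
    refine homZero_starL ?_ ?_ A hA B hB' f
    · refine homZero_starR ?_ ?_
      · intro A₁ h₁ B₁ h₂ f₁
        exact tk_vanish univSub hUt (show (m-1)+1 ≤ m by omega) h₁ (hY2G h₂) f₁
      · intro A₁ h₁ B₁ h₂ f₁
        exact tk_vanish univSub hUt (by omega) h₁ h₂ f₁
    · refine homZero_starR ?_ ?_
      · intro A₁ h₁ B₁ h₂ f₁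
        exact hY.hom_zero A₁ h₁ B₁ h₂ f₁
      · intro A₁ h₁ B₁ h₂ f₁
        exact tk_vanish univSub hUt (by omega) (hY1L0 h₁) h₂ f₁
  · -- cover
    intro A _
    exact mcover A
  · -- shiftL
    rintro A ⟨P, R, f, g, h, hP, hR, hd⟩
    have hmem : A⟦(1:ℤ)⟧ ∈ starSet D (shiftSet D L m) Y₁ :=
      ⟨P⟦(1:ℤ)⟧, R⟦(1:ℤ)⟧, _, _, _,
        tk_L_mono univSub hUt (by omega) (shiftSet_shift hP 1 (m+1) (by ring)),
        tk_shift_L_one hS hY hR, dist_shift hd 1⟩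
    exact mem_shiftSet hmem (shiftNegShiftIso A 1)
  · -- shiftG
    intro A hA
    obtain ⟨V, C, f, g, h, hV, hC, hd⟩ := shiftSet_starSet (-1) hA
    exact ⟨V, C, f, g, h, hY.shiftG hV, hUt.shiftG hC, hd⟩
  · -- L⟦m⟧ ⊆ star
    intro A hA
    exact ⟨A, 0, 𝟙 A, 0, 0, hA, tk_zero_L₀ hS hY (isZero_zero D),
      contractible_distinguished A⟩
  · -- star ⊆ L
    rintro A ⟨P, R, f, g, h, hP, hR, hd⟩
    have := tk_ext_aisle univSub hUt 0 hd (tk_L_mono univSub hUt (by omega) hP)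
      (hY1L0 hR) trivial
    exact tk_of_shiftSet_zero_L hUt this trivial
  · -- S ∩ star = Y₁
    ext A
    constructor
    · rintro ⟨hAS, P, R, f, g, h, hP, hR, hd⟩
      have hPS : P ∈ S := hS.ext₂ _ (inv_rot_of_distTriang _ hd)
        (hS.shift (-1) R (hYL hR).1) hAS
      have hPY : P ∈ Y₁ := hmY ⟨hPS, hP⟩
      refine tk_of_shiftSet_zero_L hY ?_ hAS
      refine tk_perp_aisle hS hY 0 hAS (fun V hVS hV φ => ?_)
      have hV' : V ∈ shiftSet D Y₂ (-1) := by rwa [show (0:ℤ)-1 = -1 by ring] at hV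
      obtain ⟨ψ, hψ⟩ := Triangle.yoneda_exact₂ _ hd φ (hY.hom_zero P hPY V hV' (f ≫ φ))
      rw [hψ, hY.hom_zero R hR V hV' ψ]; exact comp_zero
    · intro hA
      exact ⟨(hYL hA).1, ⟨0, A, 0, 𝟙 A, 0,
        tk_zero_L univSub hUt m (isZero_zero D), hA, contractible_distinguished₁ A⟩⟩
  · -- S ∩ starY₂G = Y₂
    ext A
    constructor
    · rintro ⟨hAS, V, C, f, g, h, hV, hC, hd⟩
      refine tk_of_shiftSet_zero_G hY ?_ hAS
      have key := tk_perp_coaisle hS hY 1 (A := A) hAS (fun B₁ hB₁S hB₁ φ => ?_)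
      · rwa [show (1:ℤ)-1 = 0 by ring] at key
      · have hB₁L : B₁ ∈ shiftSet D L 1 := shiftSet_mono (fun x hx => (hYL hx).2) 1 hB₁
        obtain ⟨ψ, hψ⟩ := Triangle.coyoneda_exact₂ _ hd φ
          (tk_vanish univSub hUt (by omega) hB₁L (mem_shiftSet_zero hC) (φ ≫ g))
        rw [hψ, tk_vanish hS hY (by omega) hB₁ (mem_shiftSet_zero hV) ψ]; exact zero_comp
    · intro hA
      exact ⟨hY.subG hA, ⟨A, 0, 𝟙 A, 0, 0, hA,
        tk_zero_G₀ univSub hUt (isZero_zero D), contractible_distinguished A⟩⟩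

end MainMu

end Stmt19
/-- Theorem 5.3: let `S` be a triangulated full subcategory of `D`
containing the heart `ℋ = U^{≤0} ∩ U^{≥0}` such that `𝒰_S = (S ∩ U^{≤0}, S ∩ U^{≥0})`
is a `t`-structure on `S`. Then `λ(X^{≤0}, X^{≥0}) = (S ∩ X^{≤0}, S ∩ X^{≥0})` and
`μ(Y^{≤0}, Y^{≥0}) = (U^{≤-m} * Y^{≤0}, Y^{≥0} * U^{≥0})` are mutually inverse, order
preserving bijections between the poset of `t`-structures on `D` with
`U^{≤-m} ⊆ X^{≤0} ⊆ U^{≤0}` and the poset of `t`-structures on `S` with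
`S ∩ U^{≤-m} ⊆ Y^{≤0} ⊆ S ∩ U^{≤0}`. -/
theorem stmt19 (L G : Set D) (hU : IsTStructure D L G) (m : ℤ) (hm : 1 ≤ m)
    (S : Set D) (hS : IsTriangulatedSub D S) (hHS : L ∩ G ⊆ S)
    (hUS : IsTStructureOn D S (S ∩ L) (S ∩ G)) :
    -- λ is well defined and μ ∘ λ = id
    (∀ X₁ X₂, IsTStructure D X₁ X₂ → shiftSet D L m ⊆ X₁ → X₁ ⊆ L →
       IsTStructureOn D S (S ∩ X₁) (S ∩ X₂) ∧
       S ∩ shiftSet D L m ⊆ S ∩ X₁ ∧ S ∩ X₁ ⊆ S ∩ L ∧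
       starSet D (shiftSet D L m) (S ∩ X₁) = X₁ ∧
       starSet D (S ∩ X₂) G = X₂) ∧
    -- μ is well defined and λ ∘ μ = id
    (∀ Y₁ Y₂, IsTStructureOn D S Y₁ Y₂ → S ∩ shiftSet D L m ⊆ Y₁ → Y₁ ⊆ S ∩ L →
       IsTStructure D (starSet D (shiftSet D L m) Y₁) (starSet D Y₂ G) ∧
       shiftSet D L m ⊆ starSet D (shiftSet D L m) Y₁ ∧
       starSet D (shiftSet D L m) Y₁ ⊆ L ∧
       S ∩ starSet D (shiftSet D L m) Y₁ = Y₁ ∧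
       S ∩ starSet D Y₂ G = Y₂) ∧
    -- λ preserves the orders (inclusion of aisles)
    (∀ X₁ X₂ X₁' X₂', IsTStructure D X₁ X₂ → IsTStructure D X₁' X₂' →
       shiftSet D L m ⊆ X₁ → X₁ ⊆ L → shiftSet D L m ⊆ X₁' → X₁' ⊆ L →
       X₁ ⊆ X₁' → S ∩ X₁ ⊆ S ∩ X₁') ∧
    -- μ preserves the orders (inclusion of aisles)
    (∀ Y₁ Y₂ Y₁' Y₂', IsTStructureOn D S Y₁ Y₂ → IsTStructureOn D S Y₁' Y₂' →
       S ∩ shiftSet D L m ⊆ Y₁ → Y₁ ⊆ S ∩ L →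
       S ∩ shiftSet D L m ⊆ Y₁' → Y₁' ⊆ S ∩ L →
       Y₁ ⊆ Y₁' → starSet D (shiftSet D L m) Y₁ ⊆ starSet D (shiftSet D L m) Y₁') := by
  
  refine ⟨?_, ?_, ?_, ?_⟩
  · intro X₁ X₂ hX h1 h2
    obtain ⟨ht, e1, e2⟩ := Stmt19.lambda_block hU hm hS hHS hUS hX h1 h2
    exact ⟨ht, fun A hA => ⟨hA.1, h1 hA.2⟩, fun A hA => ⟨hA.1, h2 hA.2⟩, e1, e2⟩
  · intro Y₁ Y₂ hY h1 h2
    exact Stmt19.mu_block hU hm hS hHS hUS hY h1 h2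
  · intro X₁ X₂ X₁' X₂' _ _ _ _ _ _ hsub A hA
    exact ⟨hA.1, hsub hA.2⟩
  · intro Y₁ Y₂ Y₁' Y₂' _ _ _ _ _ _ hsub
    exact Stmt19.starSet_mono (fun x hx => hx) hsub
end
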